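/- arXiv:1210.3236 — 10 statements merged into one kernel-verified Lean document; each statement's English description precedes it below -/
import Mathlib

section
/- The Benkart–Witherspoon R-matrix R satisfies the quadratic relation R² = (1 − r s⁻¹) R + r s⁻¹ I on V ⊗ V, i.e. (R − I)(R + r s⁻¹ I) = 0 as an n² × n² matrix identity. -/
open Matrix Kronecker BigOperators

/-- The `n × n` matrix unit `E i j` over `ℂ`. -/
noncomputable def E (n : ℕ) (i j : Fin n) : Matrix (Fin n) (Fin n) ℂ :=
  Matrix.single i j 1

/-- The Benkart–Witherspoon R-matrix on `V ⊗ V`. -/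
noncomputable def BWR (n : ℕ) (r s : ℂ) : Matrix (Fin n × Fin n) (Fin n × Fin n) ℂ :=
  (∑ i : Fin n, E n i i ⊗ₖ E n i i)
  + r • (∑ i : Fin n, ∑ j : Fin n, if i < j then E n j i ⊗ₖ E n i j else 0)
  + s⁻¹ • (∑ i : Fin n, ∑ j : Fin n, if i < j then E n i j ⊗ₖ E n j i else 0)
  + (1 - r * s⁻¹) • (∑ i : Fin n, ∑ j : Fin n, if i < j then E n j j ⊗ₖ E n i i else 0)

lemma ite_mat_apply {n : ℕ} (P : Prop) [Decidable P] (A : Matrix (Fin n × Fin n) (Fin n × Fin n) ℂ) (x y : Fin n × Fin n) :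
    (if P then A else 0) x y = if P then A x y else 0 := by
  split <;> simp

lemma hsum {n : ℕ} (u v : Fin n) (f : Fin n → Fin n → ℂ)
    (h : ∀ x y, x ≠ u ∨ y ≠ v → f x y = 0) : ∑ x : Fin n, ∑ y : Fin n, f x y = f u v := by
  rw [Finset.sum_eq_single u]
  · rw [Finset.sum_eq_single v]
    · intro y _ hy; exact h u y (Or.inr hy)
    · intro hv; exact absurd (Finset.mem_univ v) hv
  · intro x _ hx; exact Finset.sum_eq_zero fun y _ => h x y (Or.inl hx)
  · intro hu; exact absurd (Finset.mem_univ u) hu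

lemma hsum2 {α : Type*} [Fintype α] [DecidableEq α] (u v : α) (huv : u ≠ v) (f : α → ℂ)
    (h : ∀ x, x ≠ u → x ≠ v → f x = 0) : ∑ x : α, f x = f u + f v := by
  rw [← Finset.sum_subset (Finset.subset_univ ({u, v} : Finset α))
    (fun x _ hx => h x (fun h1 => hx (by simp [h1])) (fun h2 => hx (by simp [h2]))),
    Finset.sum_pair huv]

set_option maxHeartbeats 2000000 in
lemma BWR_apply (n : ℕ) (r s : ℂ) (a b c d : Fin n) :
  BWR n r s (a,b) (c,d) =
    (if a = b ∧ c = a ∧ d = a then 1 else 0)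
    + r * (if b < a ∧ c = b ∧ d = a then 1 else 0)
    + s⁻¹ * (if a < b ∧ c = b ∧ d = a then 1 else 0)
    + (1 - r*s⁻¹) * (if b < a ∧ c = a ∧ d = b then 1 else 0) := by
  simp only [BWR, E, Matrix.add_apply, Matrix.smul_apply, Matrix.sum_apply, ite_mat_apply,
    Matrix.kroneckerMap_apply, Matrix.single, Matrix.of_apply, smul_eq_mul]
  simp only [ite_and, Finset.sum_ite_eq, Finset.sum_ite_eq', mul_ite, ite_mul, Finset.mul_sum,
    mul_one, mul_zero, Finset.mem_univ, if_true]
  rw [hsum b d, hsum d b, hsum b a]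
  · simp only [if_pos rfl, if_true]
    split_ifs <;> first | rfl | (simp only [Fin.lt_def, Fin.ext_iff] at *; omega)
  all_goals (intro x y hxy; rcases hxy with h | h <;> split_ifs <;> simp_all)

set_option maxHeartbeats 2000000 in
/-- The Benkart–Witherspoon R-matrix satisfies `(R − I)(R + r s⁻¹ I) = 0`,
equivalently `R² = (1 − r s⁻¹) R + r s⁻¹ I`. -/
theorem stmt0 (n : ℕ) (hn : 2 ≤ n) (r s : ℂ) (hr : r ≠ 0) (hs : s ≠ 0) (hrs : r ≠ s) :
    (BWR n r s - 1) * (BWR n r s + (r * s⁻¹) • (1 : Matrix (Fin n × Fin n) (Fin n × Fin n) ℂ)) = 0 := by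
  ext ⟨a, b⟩ ⟨c, d⟩
  rw [Matrix.mul_apply, Matrix.zero_apply]
  rcases eq_or_ne a b with rfl | hab
  · apply Finset.sum_eq_zero
    intro k _
    obtain ⟨k1, k2⟩ := k
    have : (BWR n r s - 1) (a, a) (k1, k2) = 0 := by
      rw [Matrix.sub_apply, BWR_apply, Matrix.one_apply]
      split_ifs
      any_goals ring
      all_goals (exfalso; simp only [Prod.mk.injEq, Fin.ext_iff, Fin.lt_def, not_and, ne_eq, true_and, true_implies] at *; omega)
    rw [this, zero_mul]
  · rw [hsum2 (b, a) (a, b) (by intro h; rw [Prod.mk.injEq] at h; exact hab h.2)]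
    · rcases lt_or_gt_of_ne hab with hlt | hgt
      · -- a < b
        simp only [Matrix.sub_apply, Matrix.add_apply, Matrix.one_apply, Matrix.smul_apply,
          BWR_apply, Prod.mk.injEq, smul_eq_mul]
        have h1 : ¬ b < a := not_lt_of_gt hlt
        have h2 : ¬ b = a := (ne_of_gt hlt)
        have h3 : ¬ a = b := hab
        simp only [hlt, h1, h2, h3, if_true, if_false, true_and, false_and, and_false,
          if_neg, not_false_iff, mul_one, mul_zero, add_zero, zero_add, sub_zero]
        split_ifs
        any_goals ring
        all_goals (exfalso; simp only [Prod.mk.injEq, Fin.ext_iff, Fin.lt_def, not_and, ne_eq, true_and, true_implies] at *; omega)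
      · -- b < a
        simp only [Matrix.sub_apply, Matrix.add_apply, Matrix.one_apply, Matrix.smul_apply,
          BWR_apply, Prod.mk.injEq, smul_eq_mul]
        have h1 : ¬ a < b := not_lt_of_gt hgt
        have h2 : ¬ b = a := ne_of_lt hgt
        have h3 : ¬ a = b := hab
        simp only [hgt, h1, h2, h3, if_true, if_false, true_and, false_and, and_false,
          if_neg, not_false_iff, mul_one, mul_zero, add_zero, zero_add, sub_zero]
        split_ifs
        any_goals ring
        all_goals (exfalso; simp only [Prod.mk.injEq, Fin.ext_iff, Fin.lt_def, not_and, ne_eq, true_and, true_implies] at *; omega)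
    · intro x hka hkb
      obtain ⟨k1, k2⟩ := x
      have : (BWR n r s - 1) (a, b) (k1, k2) = 0 := by
        rw [Matrix.sub_apply, BWR_apply, Matrix.one_apply]
        split_ifs
        any_goals ring
        all_goals (exfalso; simp only [Prod.mk.injEq, Fin.ext_iff, Fin.lt_def, not_and, ne_eq, true_and, true_implies] at *; omega)
      rw [this, zero_mul]
end

section
/- If in addition s ≠ −r, then the minimal polynomial of the Benkart–Witherspoon R-matrix R (viewed as a ℂ-linear endomorphism of V ⊗ V) is (t − 1)(t + r s⁻¹). -/
open Matrix Kronecker BigOperators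

/-- Explicit entrywise form of the BW R-matrix. -/
noncomputable def Mbw (n : ℕ) (r s : ℂ) : Matrix (Fin n × Fin n) (Fin n × Fin n) ℂ :=
  fun p q =>
    (if p.1 = p.2 ∧ q = p then 1 else 0)
    + (if p.2 < p.1 ∧ q = (p.2, p.1) then r else 0)
    + (if p.1 < p.2 ∧ q = (p.2, p.1) then s⁻¹ else 0)
    + (if p.2 < p.1 ∧ q = p then 1 - r * s⁻¹ else 0)

lemma mite_apply {m n' : Type*} {c : Prop} [Decidable c] (A : Matrix m n' ℂ) (i : m) (k : n') :
    (if c then A else 0) i k = if c then A i k else 0 := by split <;> simp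

lemma BWR_eq_M (n : ℕ) (r s : ℂ) : BWR n r s = Mbw n r s := by
  ext ⟨i, j⟩ ⟨k, l⟩
  simp only [BWR, Mbw, E, Matrix.add_apply, Matrix.smul_apply, Matrix.sum_apply,
    mite_apply, Matrix.kroneckerMap_apply, Matrix.single,
    Matrix.of_apply, smul_eq_mul,
    Finset.mul_sum, mul_ite, mul_zero, mul_one, ite_mul, zero_mul,
    Prod.mk.injEq, Prod.ext_iff]
  have h1 : (∑ x : Fin n, if x = j ∧ x = l then (if x = i ∧ x = k then (1:ℂ) else 0) else 0)
      = if i = j ∧ k = i ∧ l = j then 1 else 0 := by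
    rw [Finset.sum_eq_single j]
    · split_ifs with a1 a2 a3 a4 a5 a6 a7 a8 a9 <;> (try rfl) <;> exfalso <;>
        simp only [Fin.ext_iff, Fin.lt_def, true_and, and_true, not_true, not_false_iff] at * <;> omega
    · intro x _ hx; simp [hx]
    · simp
  have h2 : (∑ x : Fin n, ∑ y : Fin n,
        if x < y then (if x = j ∧ y = l then (if y = i ∧ x = k then r else 0) else 0) else 0)
      = if j < i ∧ k = j ∧ l = i then r else 0 := by
    rw [Finset.sum_eq_single j]
    · rw [Finset.sum_eq_single l]
      · split_ifs with a1 a2 a3 a4 a5 a6 a7 a8 a9 <;> (try rfl) <;> exfalso <;>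
          simp only [Fin.ext_iff, Fin.lt_def, true_and, and_true, not_true, not_false_iff] at * <;> omega
      · intro y _ hy; simp [hy]
      · simp
    · intro x _ hx
      apply Finset.sum_eq_zero; intro y _; simp [hx]
    · simp
  have h3 : (∑ x : Fin n, ∑ y : Fin n,
        if x < y then (if y = j ∧ x = l then (if x = i ∧ y = k then s⁻¹ else 0) else 0) else 0)
      = if i < j ∧ k = j ∧ l = i then s⁻¹ else 0 := by
    rw [Finset.sum_eq_single l]
    · rw [Finset.sum_eq_single j]
      · split_ifs with a1 a2 a3 a4 a5 a6 a7 a8 a9 <;> (try rfl) <;> exfalso <;>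
          simp only [Fin.ext_iff, Fin.lt_def, true_and, and_true, not_true, not_false_iff] at * <;> omega
      · intro y _ hy; simp [hy]
      · simp
    · intro x _ hx
      apply Finset.sum_eq_zero; intro y _; simp [hx]
    · simp
  have h4 : (∑ x : Fin n, ∑ y : Fin n,
        if x < y then (if x = j ∧ x = l then (if y = i ∧ y = k then 1 - r * s⁻¹ else 0) else 0) else 0)
      = if j < i ∧ k = i ∧ l = j then 1 - r * s⁻¹ else 0 := by
    rw [Finset.sum_eq_single j]
    · rw [Finset.sum_eq_single i]
      · split_ifs with a1 a2 a3 a4 a5 a6 a7 a8 a9 <;> (try rfl) <;> exfalso <;>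
          simp only [Fin.ext_iff, Fin.lt_def, true_and, and_true, not_true, not_false_iff] at * <;> omega
      · intro y _ hy; simp [hy]
      · simp
    · intro x _ hx
      apply Finset.sum_eq_zero; intro y _; simp [hx]
    · simp
  rw [h1, h2, h3, h4]

lemma sum_ite_mul' {α : Type*} [Fintype α] [DecidableEq α] (c : Prop) [Decidable c]
    (w : α) (v : ℂ) (g : α → ℂ) :
    ∑ x : α, (if c ∧ x = w then v else 0) * g x = if c then v * g w else 0 := by
  rw [Finset.sum_eq_single w]
  · split_ifs with a1 a2 a3 <;> simp_all
  · intro x _ hx; simp [hx]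
  · simp

lemma M_mul_M (n : ℕ) (r s : ℂ) :
    Mbw n r s * Mbw n r s = (1 - r * s⁻¹) • Mbw n r s + (r * s⁻¹) • 1 := by
  ext ⟨i, j⟩ ⟨k, l⟩
  rw [Matrix.mul_apply]
  have expand : ∀ x : Fin n × Fin n, Mbw n r s (i, j) x * Mbw n r s x (k, l)
      = (if i = j ∧ x = (i, j) then (1:ℂ) else 0) * Mbw n r s x (k, l)
      + (if j < i ∧ x = (j, i) then r else 0) * Mbw n r s x (k, l)
      + (if i < j ∧ x = (j, i) then s⁻¹ else 0) * Mbw n r s x (k, l)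
      + (if j < i ∧ x = (i, j) then 1 - r * s⁻¹ else 0) * Mbw n r s x (k, l) := by
    intro x
    have hx : Mbw n r s (i, j) x
        = (if i = j ∧ x = (i, j) then (1:ℂ) else 0)
        + (if j < i ∧ x = (j, i) then r else 0)
        + (if i < j ∧ x = (j, i) then s⁻¹ else 0)
        + (if j < i ∧ x = (i, j) then 1 - r * s⁻¹ else 0) := rfl
    rw [hx, add_mul, add_mul, add_mul]
  rw [Finset.sum_congr rfl (fun x _ => expand x)]
  rw [Finset.sum_add_distrib, Finset.sum_add_distrib, Finset.sum_add_distrib]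
  rw [sum_ite_mul', sum_ite_mul', sum_ite_mul', sum_ite_mul']
  clear expand
  rcases lt_trichotomy i j with hij | rfl | hij
  · -- i < j
    simp only [Mbw, Matrix.add_apply, Matrix.smul_apply, Matrix.one_apply, smul_eq_mul,
      Prod.mk.injEq, hij, hij.ne, hij.ne', not_lt_of_gt hij, if_true, if_false,
      false_and, true_and, and_true, if_neg (fun hh : False => hh)]
    split_ifs with b1 b2 b3 b4 b5 b6 b7 b8 b9 b10 <;>
      first
        | ring1
        | (exfalso; simp only [Prod.ext_iff, Fin.ext_iff, Fin.lt_def, true_and, and_true,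
            not_true, not_false_iff, Prod.mk.injEq] at * <;> omega)
  · -- i = j
    simp only [Mbw, Matrix.add_apply, Matrix.smul_apply, Matrix.one_apply, smul_eq_mul,
      Prod.mk.injEq, lt_irrefl, if_true, if_false, false_and, true_and, and_true,
      eq_self_iff_true]
    split_ifs with b1 b2 b3 b4 b5 b6 b7 b8 b9 b10 <;>
      first
        | ring1
        | (exfalso; simp only [Prod.ext_iff, Fin.ext_iff, Fin.lt_def, true_and, and_true,
            not_true, not_false_iff, Prod.mk.injEq] at * <;> omega)
  · -- j < i
    simp only [Mbw, Matrix.add_apply, Matrix.smul_apply, Matrix.one_apply, smul_eq_mul,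
      Prod.mk.injEq, hij, hij.ne, hij.ne', not_lt_of_gt hij, if_true, if_false,
      false_and, true_and, and_true]
    split_ifs with b1 b2 b3 b4 b5 b6 b7 b8 b9 b10 <;>
      first
        | ring1
        | (exfalso; simp only [Prod.ext_iff, Fin.ext_iff, Fin.lt_def, true_and, and_true,
            not_true, not_false_iff, Prod.mk.injEq] at * <;> omega)

open Polynomial in
/-- If `s ≠ -r`, the minimal polynomial of the Benkart–Witherspoon R-matrix is
`(t − 1)(t + r s⁻¹)`. -/
theorem stmt3 (n : ℕ) (hn : 2 ≤ n) (r s : ℂ) (hr : r ≠ 0) (hs : s ≠ 0) (hrs : r ≠ s) (hsr : s ≠ -r) :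
    minpoly ℂ (BWR n r s) = (X - 1) * (X + C (r * s⁻¹)) := by
  haveI : NeZero n := ⟨by omega⟩
  set c : ℂ := r * s⁻¹ with hc
  -- R is not of the form a • 1
  have hnotscalar : ∀ a : ℂ,
      BWR n r s ≠ a • (1 : Matrix (Fin n × Fin n) (Fin n × Fin n) ℂ) := by
    intro a h
    obtain ⟨z, o, hlt⟩ : ∃ z o : Fin n, z < o :=
      ⟨⟨0, by omega⟩, ⟨1, by omega⟩, by simp [Fin.lt_def]⟩
    have h2 := congrFun (congrFun h (o, z)) (z, o)
    rw [BWR_eq_M] at h2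
    have hL : Mbw n r s (o, z) (z, o) = r := by
      simp only [Mbw, Prod.mk.injEq]
      split_ifs with b1 b2 b3 b4 <;>
        first
          | ring1
          | (exfalso; simp only [Prod.ext_iff, Fin.ext_iff, Fin.lt_def, true_and, and_true,
              not_true, not_false_iff, Prod.mk.injEq] at *; omega)
    rw [hL, Matrix.smul_apply, Matrix.one_apply_ne, smul_zero] at h2
    · exact hr h2
    · intro hh
      have hoz : o = z := (Prod.ext_iff.mp hh).1
      exact lt_irrefl z (hoz ▸ hlt)
  -- the quadratic relation
  have hquad : BWR n r s * BWR n r s = (1 - c) • BWR n r s + c • 1 := by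
    rw [BWR_eq_M]; exact M_mul_M n r s
  have hann : (Polynomial.aeval (BWR n r s)) ((X - 1) * (X + C c)) = 0 := by
    rw [_root_.map_mul, map_sub, map_add, Polynomial.aeval_X, _root_.map_one, Polynomial.aeval_C,
      Algebra.algebraMap_eq_smul_one, sub_mul, mul_add, mul_add, hquad, one_mul,
      mul_smul_comm, mul_one, sub_smul, one_smul, one_mul]
    abel
  have hmonic : ((X - 1) * (X + C c) : ℂ[X]).Monic := by
    have h1 : (X - 1 : ℂ[X]) = X - C 1 := by simp
    exact (h1 ▸ monic_X_sub_C 1).mul (monic_X_add_C c)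
  have hXsub : (X - 1 : ℂ[X]) = X - C 1 := by simp
  have hdeg : ((X - 1) * (X + C c) : ℂ[X]).natDegree = 2 := by
    rw [hXsub, Polynomial.natDegree_mul (X_sub_C_ne_zero 1) (X_add_C_ne_zero c),
      natDegree_X_sub_C, natDegree_X_add_C]
  refine (minpoly.unique ℂ _ hmonic hann ?_).symm
  intro q hq hq0
  have hq_ne : q ≠ 0 := hq.ne_zero
  by_contra hlt
  push_neg at hlt
  have hdegq : q.natDegree < 2 := by
    have h2 := Polynomial.natDegree_lt_natDegree hq_ne hlt
    rwa [hdeg] at h2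
  rcases (by omega : q.natDegree = 0 ∨ q.natDegree = 1) with h | h
  · have hq1 : q = 1 := hq.natDegree_eq_zero.mp h
    rw [hq1, _root_.map_one] at hq0
    exact one_ne_zero hq0
  · have hqeq : q = X + C (q.coeff 0) := hq.eq_X_add_C h
    rw [hqeq, map_add, Polynomial.aeval_X, Polynomial.aeval_C,
      Algebra.algebraMap_eq_smul_one] at hq0
    have hfin : BWR n r s = (-(q.coeff 0)) • (1 : Matrix (Fin n × Fin n) (Fin n × Fin n) ℂ) := by
      rw [neg_smul, ← sub_eq_zero, sub_neg_eq_add]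
      exact hq0
    exact hnotscalar _ hfin
end

section
/- If in addition s ≠ −r, then V ⊗ V decomposes as the internal direct sum of the subspaces S²_{r,s}(V) and Λ²_{r,s}(V); that is, these two subspaces are complementary: their intersection is zero and their sum is all of V ⊗ V. -/
open Matrix Kronecker BigOperators

/-- The `(r,s)`-symmetric square `S²_{r,s}(V) ⊆ V ⊗ V`, with `V ⊗ V` modelled as
`Fin n × Fin n → ℂ` and `v_i ⊗ v_j = Pi.single (i, j) 1`. -/
noncomputable def Ssub (n : ℕ) (s : ℂ) : Submodule ℂ (Fin n × Fin n → ℂ) :=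
  Submodule.span ℂ ({ f | ∃ i : Fin n, f = (Pi.single (i, i) 1 : Fin n × Fin n → ℂ) } ∪
    { f | ∃ i j : Fin n, i < j ∧
      f = (Pi.single (i, j) 1 : Fin n × Fin n → ℂ) + s • (Pi.single (j, i) 1 : Fin n × Fin n → ℂ) })

/-- The `(r,s)`-antisymmetric square `Λ²_{r,s}(V) ⊆ V ⊗ V`. -/
noncomputable def Lsub (n : ℕ) (r : ℂ) : Submodule ℂ (Fin n × Fin n → ℂ) :=
  Submodule.span ℂ { f | ∃ i j : Fin n, i < j ∧
    f = (Pi.single (i, j) 1 : Fin n × Fin n → ℂ) - r • (Pi.single (j, i) 1 : Fin n × Fin n → ℂ) }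

/-- Projection of `V ⊗ V` onto `Λ²_{r,s}(V)` along `S²_{r,s}(V)`. -/
noncomputable def Pmap (n : ℕ) (r s : ℂ) : (Fin n × Fin n → ℂ) →ₗ[ℂ] (Fin n × Fin n → ℂ) where
  toFun f := fun p => if p.1 < p.2 then (s * f p - f (p.2, p.1)) / (r + s)
    else if p.2 < p.1 then (-r) * (s * f (p.2, p.1) - f p) / (r + s) else 0
  map_add' f g := by funext p; dsimp; split_ifs <;> ring
  map_smul' c f := by funext p; dsimp; split_ifs <;> ring

lemma Pmap_diag (n : ℕ) (r s : ℂ) (i : Fin n) :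
    Pmap n r s (Pi.single (i, i) 1 : Fin n × Fin n → ℂ) = 0 := by
  funext ⟨k, l⟩
  simp only [Pmap, LinearMap.coe_mk, AddHom.coe_mk, Pi.single_apply, Pi.zero_apply,
    Prod.mk.injEq]
  split_ifs <;> first | omega | (push_neg at *; field_simp) | (field_simp; ring)
  all_goals simp

lemma Pmap_sym (n : ℕ) (r s : ℂ) (i j : Fin n) (hij : i < j) :
    Pmap n r s ((Pi.single (i, j) 1 : Fin n × Fin n → ℂ) +
      s • (Pi.single (j, i) 1 : Fin n × Fin n → ℂ)) = 0 := by
  funext ⟨k, l⟩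
  simp only [Pmap, LinearMap.coe_mk, AddHom.coe_mk, Pi.add_apply, Pi.smul_apply,
    Pi.single_apply, smul_eq_mul, Pi.zero_apply, Prod.mk.injEq]
  split_ifs <;> first | omega | (push_neg at *; field_simp) | (field_simp; ring)
  all_goals simp

lemma Pmap_asym (n : ℕ) (r s : ℂ) (hrs : r + s ≠ 0) (i j : Fin n) (hij : i < j) :
    Pmap n r s ((Pi.single (i, j) 1 : Fin n × Fin n → ℂ) -
      r • (Pi.single (j, i) 1 : Fin n × Fin n → ℂ)) =
    (Pi.single (i, j) 1 : Fin n × Fin n → ℂ) -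
      r • (Pi.single (j, i) 1 : Fin n × Fin n → ℂ) := by
  funext ⟨k, l⟩
  simp only [Pmap, LinearMap.coe_mk, AddHom.coe_mk, Pi.sub_apply, Pi.smul_apply,
    Pi.single_apply, smul_eq_mul, Prod.mk.injEq]
  split_ifs <;> first | omega |
    (push_neg at *; field_simp; try (first | ring1 | exact Or.inl (by ring1)))

lemma Ssub_ker (n : ℕ) (r s : ℂ) : Ssub n s ≤ LinearMap.ker (Pmap n r s) := by
  rw [Ssub, Submodule.span_le]
  rintro f (⟨i, rfl⟩ | ⟨i, j, hij, rfl⟩)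
  · exact Pmap_diag n r s i
  · exact Pmap_sym n r s i j hij

lemma Lsub_fix (n : ℕ) (r s : ℂ) (hrs : r + s ≠ 0) :
    Lsub n r ≤ LinearMap.ker (Pmap n r s - LinearMap.id) := by
  rw [Lsub, Submodule.span_le]
  rintro f ⟨i, j, hij, rfl⟩
  simp only [SetLike.mem_coe, LinearMap.mem_ker, LinearMap.sub_apply, LinearMap.id_apply,
    sub_eq_zero]
  exact Pmap_asym n r s hrs i j hij

lemma single_mem_sup (n : ℕ) (r s : ℂ) (hrs : r + s ≠ 0) (i j : Fin n) :
    (Pi.single (i, j) 1 : Fin n × Fin n → ℂ) ∈ Ssub n s ⊔ Lsub n r := by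
  have hS : ∀ a b : Fin n, a < b →
      (Pi.single (a, b) 1 : Fin n × Fin n → ℂ) +
        s • (Pi.single (b, a) 1 : Fin n × Fin n → ℂ) ∈ Ssub n s :=
    fun a b hab => Submodule.subset_span (Or.inr ⟨a, b, hab, rfl⟩)
  have hL : ∀ a b : Fin n, a < b →
      (Pi.single (a, b) 1 : Fin n × Fin n → ℂ) -
        r • (Pi.single (b, a) 1 : Fin n × Fin n → ℂ) ∈ Lsub n r :=
    fun a b hab => Submodule.subset_span ⟨a, b, hab, rfl⟩
  rcases lt_trichotomy i j with h | h | h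
  · have key : (Pi.single (i, j) 1 : Fin n × Fin n → ℂ) =
        (r / (r + s)) • ((Pi.single (i, j) 1 : Fin n × Fin n → ℂ) +
          s • (Pi.single (j, i) 1 : Fin n × Fin n → ℂ)) +
        (s / (r + s)) • ((Pi.single (i, j) 1 : Fin n × Fin n → ℂ) -
          r • (Pi.single (j, i) 1 : Fin n × Fin n → ℂ)) := by
      funext p
      simp only [Pi.add_apply, Pi.sub_apply, Pi.smul_apply, smul_eq_mul]
      field_simp
      ring
    rw [key]
    exact Submodule.add_mem _
      (Submodule.smul_mem _ _ (Submodule.mem_sup_left (hS i j h)))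
      (Submodule.smul_mem _ _ (Submodule.mem_sup_right (hL i j h)))
  · subst h
    exact Submodule.mem_sup_left (Submodule.subset_span (Or.inl ⟨i, rfl⟩))
  · have key : (Pi.single (i, j) 1 : Fin n × Fin n → ℂ) =
        ((r + s)⁻¹) • ((Pi.single (j, i) 1 : Fin n × Fin n → ℂ) +
          s • (Pi.single (i, j) 1 : Fin n × Fin n → ℂ)) -
        ((r + s)⁻¹) • ((Pi.single (j, i) 1 : Fin n × Fin n → ℂ) -
          r • (Pi.single (i, j) 1 : Fin n × Fin n → ℂ)) := by
      funext p
      simp only [Pi.add_apply, Pi.sub_apply, Pi.smul_apply, smul_eq_mul]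
      field_simp
      ring
    rw [key]
    exact Submodule.sub_mem _
      (Submodule.smul_mem _ _ (Submodule.mem_sup_left (hS j i h)))
      (Submodule.smul_mem _ _ (Submodule.mem_sup_right (hL j i h)))

/-- If `s ≠ -r`, then `V ⊗ V = S²_{r,s}(V) ⊕ Λ²_{r,s}(V)` as an internal direct sum. -/
theorem stmt4 (n : ℕ) (hn : 2 ≤ n) (r s : ℂ) (hr : r ≠ 0) (hs : s ≠ 0) (hrs : r ≠ s) (hsr : s ≠ -r) :
    Ssub n s ⊓ Lsub n r = ⊥ ∧ Ssub n s ⊔ Lsub n r = ⊤ := by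
  have hrs0 : r + s ≠ 0 := fun h => hsr (by linear_combination h)
  constructor
  · rw [eq_bot_iff]
    rintro x ⟨hxS, hxL⟩
    have h1 : Pmap n r s x = 0 := Ssub_ker n r s hxS
    have h2 : Pmap n r s x - x = 0 := by
      have := Lsub_fix n r s hrs0 hxL
      simpa using this
    have : x = 0 := by rw [h1] at h2; simpa using h2.symm
    simpa using this
  · rw [eq_top_iff]
    intro x _
    have hx : x = ∑ p : Fin n × Fin n, x p • (Pi.single p 1 : Fin n × Fin n → ℂ) := by
      conv_lhs => rw [← Finset.univ_sum_single x]
      refine Finset.sum_congr rfl fun p _ => ?_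
      rw [← Pi.single_smul, smul_eq_mul, mul_one]
    rw [hx]
    exact Submodule.sum_mem _ fun p _ =>
      Submodule.smul_mem _ _ (single_mem_sup n r s hrs0 p.1 p.2)
end

section
/- Every vector w in the subspace Λ²_{r,s}(V) is an eigenvector of the Benkart–Witherspoon R-matrix with eigenvalue −r s⁻¹: R w = −r s⁻¹ w. -/
open Matrix Kronecker BigOperators

lemma kron_E (n : ℕ) (p q p' q' : Fin n) :
    E n p q ⊗ₖ E n p' q' = Matrix.single (p, p') (q, q') (1 : ℂ) := by
  ext ⟨a, b⟩ ⟨c, d⟩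
  simp only [E, Matrix.kroneckerMap_apply, Matrix.single, Matrix.of_apply,
    Prod.mk.injEq]
  by_cases h1 : p = a <;> by_cases h2 : q = c <;> by_cases h3 : p' = b <;>
    by_cases h4 : q' = d <;> simp [h1, h2, h3, h4]

/-- Generic double-sum column lemma: the column `y` picks out the unique pair `(a, b)`. -/
lemma dsum_apply (n : ℕ) (F G : Fin n → Fin n → Fin n × Fin n) (x y : Fin n × Fin n)
    (a b : Fin n)
    (hG : ∀ c d, c < d → (G c d = y ↔ c = a ∧ d = b)) :
    (∑ c : Fin n, ∑ d : Fin n,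
        if c < d then (Matrix.single (F c d) (G c d) (1 : ℂ)) else 0) x y =
      if a < b ∧ x = F a b then 1 else 0 := by
  simp only [Matrix.sum_apply]
  rw [Finset.sum_eq_single a]
  · rw [Finset.sum_eq_single b]
    · by_cases h : a < b
      · have hGab : G a b = y := (hG a b h).mpr ⟨rfl, rfl⟩
        by_cases hx : x = F a b
        · simp [h, hx, hGab, Matrix.single, Prod.ext_iff, eq_comm]
        · have hx' : ¬(x.1 = (F a b).1 ∧ x.2 = (F a b).2) :=
            fun h' => hx (Prod.ext h'.1 h'.2)
          simp [h, hGab, Matrix.single, Prod.ext_iff, hx', eq_comm]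
      · simp [h]
    · intro d _ hd
      by_cases h : a < d
      · simp only [h, if_true]
        apply Matrix.single_apply_of_ne
        rintro ⟨-, h2⟩
        exact hd ((hG a d h).mp h2).2
      · simp [h]
    · simp
  · intro c _ hc
    apply Finset.sum_eq_zero
    intro d _
    by_cases h : c < d
    · simp only [h, if_true]
      apply Matrix.single_apply_of_ne
      rintro ⟨-, h2⟩
      exact hc ((hG c d h).mp h2).1
    · simp [h]
  · simp

/-- Generic double-sum column lemma: the column `y` misses every pair. -/
lemma dsum_apply_zero (n : ℕ) (F G : Fin n → Fin n → Fin n × Fin n) (x y : Fin n × Fin n)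
    (hG : ∀ c d, c < d → G c d ≠ y) :
    (∑ c : Fin n, ∑ d : Fin n,
        if c < d then (Matrix.single (F c d) (G c d) (1 : ℂ)) else 0) x y = 0 := by
  simp only [Matrix.sum_apply]
  apply Finset.sum_eq_zero; intro c _
  apply Finset.sum_eq_zero; intro d _
  by_cases h : c < d
  · simp only [h, if_true]
    apply Matrix.single_apply_of_ne
    rintro ⟨-, h2⟩
    exact hG c d h h2
  · simp [h]

lemma diag_col (n : ℕ) (x : Fin n × Fin n) (p q : Fin n) (h : p ≠ q) :
    (∑ c : Fin n, Matrix.single ((c, c) : Fin n × Fin n) (c, c) (1 : ℂ)) x (p, q) = 0 := by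
  rw [Matrix.sum_apply]
  apply Finset.sum_eq_zero; intro c _
  apply Matrix.single_apply_of_ne
  rintro ⟨-, h2⟩
  obtain ⟨h3, h4⟩ := Prod.mk.injEq .. ▸ h2
  exact h (h3 ▸ h4 ▸ rfl)

lemma BWR_col_ij (n : ℕ) (r s : ℂ) (i j : Fin n) (hij : i < j) (x : Fin n × Fin n) :
    BWR n r s x (i, j) = if x = (j, i) then r else 0 := by
  have hne : i ≠ j := ne_of_lt hij
  simp only [BWR, kron_E, Matrix.add_apply, Matrix.smul_apply, smul_eq_mul]
  rw [diag_col n x i j hne,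
    dsum_apply n (fun c d => (d, c)) (fun c d => (c, d)) x (i, j) i j
      (by intro c d _; simp [Prod.ext_iff]),
    dsum_apply_zero n (fun c d => (c, d)) (fun c d => (d, c)) x (i, j)
      (by rintro c d hcd h2
          obtain ⟨h3, h4⟩ := Prod.mk.injEq .. ▸ h2
          exact absurd (h3 ▸ h4 ▸ hcd) (not_lt.mpr hij.le)),
    dsum_apply_zero n (fun c d => (d, c)) (fun c d => (d, c)) x (i, j)
      (by rintro c d hcd h2
          obtain ⟨h3, h4⟩ := Prod.mk.injEq .. ▸ h2
          exact absurd (h3 ▸ h4 ▸ hcd) (not_lt.mpr hij.le))]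
  by_cases hx : x = (j, i) <;> simp [hij, hx]

lemma BWR_col_ji (n : ℕ) (r s : ℂ) (i j : Fin n) (hij : i < j) (x : Fin n × Fin n) :
    BWR n r s x (j, i) =
      (if x = (i, j) then s⁻¹ else 0) + (if x = (j, i) then 1 - r * s⁻¹ else 0) := by
  have hne : j ≠ i := ne_of_gt hij
  simp only [BWR, kron_E, Matrix.add_apply, Matrix.smul_apply, smul_eq_mul]
  rw [diag_col n x j i hne,
    dsum_apply_zero n (fun c d => (d, c)) (fun c d => (c, d)) x (j, i)
      (by rintro c d hcd h2
          obtain ⟨h3, h4⟩ := Prod.mk.injEq .. ▸ h2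
          exact absurd (h3 ▸ h4 ▸ hcd) (not_lt.mpr hij.le)),
    dsum_apply n (fun c d => (c, d)) (fun c d => (d, c)) x (j, i) i j
      (by intro c d _; simp [Prod.ext_iff, and_comm]),
    dsum_apply n (fun c d => (d, c)) (fun c d => (d, c)) x (j, i) i j
      (by intro c d _; simp [Prod.ext_iff, and_comm])]
  by_cases hx1 : x = (i, j) <;> by_cases hx2 : x = (j, i) <;>
    simp_all [hij, Prod.ext_iff] <;> ring

lemma key (n : ℕ) (r s : ℂ) (i j : Fin n) (hij : i < j) :
    (BWR n r s).mulVec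
        ((Pi.single (i, j) 1 : Fin n × Fin n → ℂ) - r • (Pi.single (j, i) 1 : Fin n × Fin n → ℂ))
      = (-(r * s⁻¹)) •
        ((Pi.single (i, j) 1 : Fin n × Fin n → ℂ) - r • (Pi.single (j, i) 1 : Fin n × Fin n → ℂ)) := by
  rw [Matrix.mulVec_sub, Matrix.mulVec_smul, Matrix.mulVec_single, Matrix.mulVec_single]
  funext x
  have hne : (i, j) ≠ ((j, i) : Fin n × Fin n) := by
    simp [Prod.ext_iff]; intro h; exact absurd h (ne_of_lt hij)
  simp only [Pi.sub_apply, Pi.smul_apply, smul_eq_mul, Pi.single_apply, op_smul_eq_mul,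
    Matrix.col_apply,
    BWR_col_ij n r s i j hij x, BWR_col_ji n r s i j hij x, mul_one]
  by_cases hx1 : x = (i, j) <;> by_cases hx2 : x = (j, i) <;>
    simp_all <;> ring

/-- Every vector of `Λ²_{r,s}(V)` is an eigenvector of the Benkart–Witherspoon
R-matrix with eigenvalue `−r s⁻¹`. -/
theorem stmt8 (n : ℕ) (hn : 2 ≤ n) (r s : ℂ) (hr : r ≠ 0) (hs : s ≠ 0) (hrs : r ≠ s) :
    ∀ w ∈ Lsub n r, (BWR n r s).mulVec w = (-(r * s⁻¹)) • w := by
  intro w hw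
  induction hw using Submodule.span_induction with
  | mem f hf =>
    obtain ⟨i, j, hij, rfl⟩ := hf
    exact key n r s i j hij
  | zero => simp
  | add f g _ _ hf hg => rw [Matrix.mulVec_add, hf, hg, smul_add]
  | smul c f _ hf => rw [Matrix.mulVec_smul, hf, smul_comm]
end

section
/- The spectral-parameter R-matrix R(z) satisfies the Yang–Baxter equation with multiplicative spectral parameter: for all z, w ∈ ℂ, writing R₁(z) = R(z) ⊗ I_n and R₂(z) = I_n ⊗ R(z) as n³ × n³ matrices, one has R₁(z) R₂(zw) R₁(w) = R₂(w) R₁(zw) R₂(z). -/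
open Matrix Kronecker BigOperators

/-- The spectral-parameter R-matrix `R(z)`. -/
noncomputable def Rz (n : ℕ) (r s z : ℂ) : Matrix (Fin n × Fin n) (Fin n × Fin n) ℂ :=
  (1 - z * (r * s⁻¹)) • (∑ i : Fin n, E n i i ⊗ₖ E n i i)
  + (1 - z) • (r • (∑ i : Fin n, ∑ j : Fin n, if j < i then E n i j ⊗ₖ E n j i else 0)
      + s⁻¹ • (∑ i : Fin n, ∑ j : Fin n, if i < j then E n i j ⊗ₖ E n j i else 0))
  + (z * (1 - r * s⁻¹)) • (∑ i : Fin n, ∑ j : Fin n, if i < j then E n i i ⊗ₖ E n j j else 0)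
  + (1 - r * s⁻¹) • (∑ i : Fin n, ∑ j : Fin n, if j < i then E n i i ⊗ₖ E n j j else 0)


noncomputable def Dc (r s z : ℂ) {n : ℕ} (i j : Fin n) : ℂ :=
  if i = j then 1 - z * (r * s⁻¹) else if i < j then z * (1 - r * s⁻¹) else 1 - r * s⁻¹

noncomputable def Oc (r s z : ℂ) {n : ℕ} (i j : Fin n) : ℂ :=
  if i = j then 0 else if i < j then (1 - z) * s⁻¹ else (1 - z) * r

lemma double_delta {n : ℕ} (f : Fin n → Fin n → ℂ) (a b : Fin n)
    (h : ∀ x y, f x y ≠ 0 → x = a ∧ y = b) :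
    (∑ x : Fin n, ∑ y : Fin n, f x y) = f a b := by
  rw [Finset.sum_eq_single a, Finset.sum_eq_single b]
  · intro y _ hy
    by_contra hne
    exact hy (h a y hne).2
  · intro h'; exact absurd (Finset.mem_univ b) h'
  · intro x _ hx
    apply Finset.sum_eq_zero
    intro y _
    by_contra hne
    exact hx (h x y hne).1
  · intro h'; exact absurd (Finset.mem_univ a) h'

lemma single_delta {n : ℕ} (f : Fin n → ℂ) (a : Fin n)
    (h : ∀ x, f x ≠ 0 → x = a) :
    (∑ x : Fin n, f x) = f a := by
  rw [Finset.sum_eq_single a]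
  · intro x _ hx
    by_contra hne
    exact hx (h x hne)
  · intro h'; exact absurd (Finset.mem_univ a) h'

set_option maxHeartbeats 4000000 in
theorem Rz_apply (n : ℕ) (r s z : ℂ) (i j k l : Fin n) :
    Rz n r s z (i, j) (k, l) =
      (if k = i ∧ l = j then Dc r s z i j else 0)
      + (if k = j ∧ l = i then Oc r s z i j else 0) := by
  simp only [Rz, E, Matrix.add_apply, Matrix.smul_apply, Matrix.sum_apply,
    apply_ite (fun M : Matrix (Fin n × Fin n) (Fin n × Fin n) ℂ => M (i, j) (k, l)),
    Matrix.kroneckerMap_apply, Matrix.single, Matrix.of_apply, smul_eq_mul,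
    Matrix.zero_apply, mul_ite, mul_zero, mul_one]
  rw [single_delta _ j (by intro x hx; by_contra hne; simp_all),
      double_delta _ i j (by intro x y hx; constructor <;> by_contra hne <;> simp_all),
      double_delta _ i j (by intro x y hx; constructor <;> by_contra hne <;> simp_all),
      double_delta _ i j (by intro x y hx; constructor <;> by_contra hne <;> simp_all),
      double_delta _ i j (by intro x y hx; constructor <;> by_contra hne <;> simp_all)]
  simp only [Dc, Oc, ite_and, if_pos rfl]
  rcases lt_trichotomy i j with hij | hij | hij
  · simp only [if_pos hij, if_neg hij.ne, if_neg (asymm hij), if_neg hij.ne']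
    split_ifs <;> first | (exfalso; omega) | (subst_vars; ring)
  · subst hij
    simp only [if_pos rfl, lt_irrefl, if_neg (lt_irrefl i), if_false]
    split_ifs <;> first | (exfalso; omega) | (subst_vars; ring)
  · simp only [if_pos hij, if_neg hij.ne, if_neg (asymm hij), if_neg hij.ne']
    split_ifs <;> first | (exfalso; omega) | (subst_vars; ring)

/-- `I_n ⊗ M` reindexed so that it acts on `(V ⊗ V) ⊗ V`. -/
noncomputable def R2of (n : ℕ) (M : Matrix (Fin n × Fin n) (Fin n × Fin n) ℂ) :
    Matrix ((Fin n × Fin n) × Fin n) ((Fin n × Fin n) × Fin n) ℂ :=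
  Matrix.reindex (Equiv.prodAssoc (Fin n) (Fin n) (Fin n)).symm
    (Equiv.prodAssoc (Fin n) (Fin n) (Fin n)).symm ((1 : Matrix (Fin n) (Fin n) ℂ) ⊗ₖ M)

set_option maxHeartbeats 4000000 in
/-- `R(z)` satisfies the Yang–Baxter equation with multiplicative spectral parameter:
`R₁(z) R₂(zw) R₁(w) = R₂(w) R₁(zw) R₂(z)`. -/
theorem stmt10 (n : ℕ) (hn : 2 ≤ n) (r s : ℂ) (hr : r ≠ 0) (hs : s ≠ 0) (hrs : r ≠ s) : ∀ z w : ℂ,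
    (Rz n r s z ⊗ₖ (1 : Matrix (Fin n) (Fin n) ℂ)) * R2of n (Rz n r s (z * w)) *
      (Rz n r s w ⊗ₖ (1 : Matrix (Fin n) (Fin n) ℂ))
    = R2of n (Rz n r s w) * (Rz n r s (z * w) ⊗ₖ (1 : Matrix (Fin n) (Fin n) ℂ)) *
      R2of n (Rz n r s z) := by
  intro z w
  ext ⟨⟨a, b⟩, c⟩ ⟨⟨d, e⟩, f⟩
  simp only [Matrix.mul_apply, R2of, Matrix.reindex_apply, Matrix.submatrix_apply,
    Equiv.prodAssoc, Equiv.symm, Equiv.coe_fn_mk, Matrix.kroneckerMap_apply,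
    Matrix.one_apply, Rz_apply, Fintype.sum_prod_type, ite_and, add_mul, mul_add,
    Finset.sum_add_distrib, mul_ite, ite_mul, mul_zero, zero_mul, mul_one, one_mul,
    Finset.sum_ite_eq, Finset.sum_ite_eq', Finset.sum_ite_irrel, Finset.mem_univ, if_true,
    Finset.sum_const_zero, add_zero, zero_add]
  split_ifs <;>
    first
      | rfl
      | (exfalso; omega)
      | (subst_vars; (try simp only [Dc, Oc]); (try split_ifs) <;>
          first
            | rfl
            | (exfalso; omega)
            | ring
            | (field_simp; ring))
end

section
/- The image of the linear map R(r s⁻¹) on V ⊗ V equals the subspace S²_{r,s}(V). -/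
open Matrix Kronecker BigOperators

lemma sum1 (n : ℕ) (a b k l : Fin n) :
    (∑ i : Fin n, E n i i ⊗ₖ E n i i) (a,b) (k,l) = if a = k ∧ b = l ∧ a = b then 1 else 0 := by
  rw [Matrix.sum_apply]
  rw [Finset.sum_eq_single a (by intro i _ hi; simp [E, Matrix.kroneckerMap_apply, Matrix.single, hi]) (by simp)]
  simp only [E, Matrix.kroneckerMap_apply, Matrix.single, Matrix.of_apply]
  split_ifs <;> aesop

lemma sum2 (n : ℕ) (a b k l : Fin n) :
    (∑ i : Fin n, ∑ j : Fin n, if j < i then E n i j ⊗ₖ E n j i else 0) (a,b) (k,l)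
      = if l = a ∧ k = b ∧ b < a then 1 else 0 := by
  rw [Matrix.sum_apply]
  rw [Finset.sum_eq_single a (by
    intro i _ hi
    rw [Matrix.sum_apply]
    apply Finset.sum_eq_zero
    intro j _
    split_ifs <;> simp [E, Matrix.kroneckerMap_apply, Matrix.single, hi]) (by simp)]
  rw [Matrix.sum_apply]
  rw [Finset.sum_eq_single b (by
    intro j _ hj
    split_ifs <;> simp [E, Matrix.kroneckerMap_apply, Matrix.single, hj]) (by simp)]
  simp only [E, Matrix.kroneckerMap_apply, Matrix.single, Matrix.of_apply]
  split_ifs <;> aesop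

lemma sum3 (n : ℕ) (a b k l : Fin n) :
    (∑ i : Fin n, ∑ j : Fin n, if i < j then E n i j ⊗ₖ E n j i else 0) (a,b) (k,l)
      = if l = a ∧ k = b ∧ a < b then 1 else 0 := by
  rw [Matrix.sum_apply]
  rw [Finset.sum_eq_single a (by
    intro i _ hi
    rw [Matrix.sum_apply]
    apply Finset.sum_eq_zero
    intro j _
    split_ifs <;> simp [E, Matrix.kroneckerMap_apply, Matrix.single, hi]) (by simp)]
  rw [Matrix.sum_apply]
  rw [Finset.sum_eq_single b (by
    intro j _ hj
    split_ifs <;> simp [E, Matrix.kroneckerMap_apply, Matrix.single, hj]) (by simp)]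
  simp only [E, Matrix.kroneckerMap_apply, Matrix.single, Matrix.of_apply]
  split_ifs <;> aesop

lemma sum4 (n : ℕ) (a b k l : Fin n) :
    (∑ i : Fin n, ∑ j : Fin n, if i < j then E n i i ⊗ₖ E n j j else 0) (a,b) (k,l)
      = if k = a ∧ l = b ∧ a < b then 1 else 0 := by
  rw [Matrix.sum_apply]
  rw [Finset.sum_eq_single a (by
    intro i _ hi
    rw [Matrix.sum_apply]
    apply Finset.sum_eq_zero
    intro j _
    split_ifs <;> simp [E, Matrix.kroneckerMap_apply, Matrix.single, hi]) (by simp)]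
  rw [Matrix.sum_apply]
  rw [Finset.sum_eq_single b (by
    intro j _ hj
    split_ifs <;> simp [E, Matrix.kroneckerMap_apply, Matrix.single, hj]) (by simp)]
  simp only [E, Matrix.kroneckerMap_apply, Matrix.single, Matrix.of_apply]
  split_ifs <;> aesop

lemma sum5 (n : ℕ) (a b k l : Fin n) :
    (∑ i : Fin n, ∑ j : Fin n, if j < i then E n i i ⊗ₖ E n j j else 0) (a,b) (k,l)
      = if k = a ∧ l = b ∧ b < a then 1 else 0 := by
  rw [Matrix.sum_apply]
  rw [Finset.sum_eq_single a (by
    intro i _ hi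
    rw [Matrix.sum_apply]
    apply Finset.sum_eq_zero
    intro j _
    split_ifs <;> simp [E, Matrix.kroneckerMap_apply, Matrix.single, hi]) (by simp)]
  rw [Matrix.sum_apply]
  rw [Finset.sum_eq_single b (by
    intro j _ hj
    split_ifs <;> simp [E, Matrix.kroneckerMap_apply, Matrix.single, hj]) (by simp)]
  simp only [E, Matrix.kroneckerMap_apply, Matrix.single, Matrix.of_apply]
  split_ifs <;> aesop

set_option maxHeartbeats 1000000 in
lemma Rz_col (n : ℕ) (r s z : ℂ) (k l : Fin n) :
    (Rz n r s z)ᵀ (k,l) =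
      if k = l then (1 - z*(r*s⁻¹)) • (Pi.single (k,k) (1:ℂ) : Fin n × Fin n → ℂ)
      else if k < l then (z*(1-r*s⁻¹)) • (Pi.single (k,l) 1 : Fin n × Fin n → ℂ)
            + ((1-z)*r) • (Pi.single (l,k) 1 : Fin n × Fin n → ℂ)
      else (1-r*s⁻¹) • (Pi.single (k,l) 1 : Fin n × Fin n → ℂ)
            + ((1-z)*s⁻¹) • (Pi.single (l,k) 1 : Fin n × Fin n → ℂ) := by
  funext p
  obtain ⟨a,b⟩ := p
  simp only [Matrix.transpose_apply, Rz, Matrix.add_apply, Matrix.smul_apply, smul_eq_mul,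
    sum1, sum2, sum3, sum4, sum5]
  by_cases hkl : k = l
  · subst hkl
    rw [if_pos rfl]
    simp only [Pi.smul_apply, Pi.single_apply, Prod.mk.injEq, smul_eq_mul]
    by_cases ha : a = k <;> by_cases hb : b = k <;>
      simp only [ha, hb, and_self, and_true, true_and, if_true, if_false, eq_self_iff_true,
        lt_irrefl, and_false, false_and, if_neg, not_false_iff] <;>
      (try split_ifs) <;> first | ring1 | (exfalso; omega)
  · rw [if_neg hkl]
    by_cases hlt : k < l
    · rw [if_pos hlt]
      simp only [Pi.add_apply, Pi.smul_apply, Pi.single_apply, Prod.mk.injEq, smul_eq_mul]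
      have h1 := lt_asymm hlt
      (try split_ifs) <;> first | ring1 | (exfalso; omega)
    · rw [if_neg hlt]
      simp only [Pi.add_apply, Pi.smul_apply, Pi.single_apply, Prod.mk.injEq, smul_eq_mul]
      have hlk : l < k := lt_of_le_of_ne (not_lt.mp hlt) (Ne.symm hkl)
      have h1 := lt_asymm hlk
      (try split_ifs) <;> first | ring1 | (exfalso; omega)

/-- The image of `R(r s⁻¹)` on `V ⊗ V` equals `S²_{r,s}(V)`. -/
theorem stmt13 (n : ℕ) (hn : 2 ≤ n) (r s : ℂ) (hr : r ≠ 0) (hs : s ≠ 0) (hrs : r ≠ s) (hsr : s ≠ -r) :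
    LinearMap.range (Rz n r s (r * s⁻¹)).mulVecLin = Ssub n s := by
  have hu : (1 : ℂ) - r * s⁻¹ ≠ 0 := by
    intro h
    apply hrs
    field_simp at h
    linear_combination -h
  have hz : r * s⁻¹ ≠ 0 := mul_ne_zero hr (inv_ne_zero hs)
  have hc0 : (1 : ℂ) - r * s⁻¹ * (r * s⁻¹) ≠ 0 := by
    intro h
    have h' : (s - r) * (s + r) = 0 := by
      have := mul_eq_zero_of_left h (s * s)
      field_simp at this ⊢
      linear_combination this
    rcases mul_eq_zero.mp h' with h'' | h''
    · exact hrs (by linear_combination -h'')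
    · exact hsr (by linear_combination h'')
  have hc1 : r * s⁻¹ * (1 - r * s⁻¹) ≠ 0 := mul_ne_zero hz hu
  have hd2 : (1 - r * s⁻¹) * s⁻¹ ≠ 0 := mul_ne_zero hu (inv_ne_zero hs)
  -- column computations at z = r s⁻¹
  have col_diag : ∀ k : Fin n, (Rz n r s (r * s⁻¹))ᵀ (k,k)
      = (1 - r * s⁻¹ * (r * s⁻¹)) • (Pi.single (k,k) (1:ℂ) : Fin n × Fin n → ℂ) := by
    intro k
    rw [Rz_col, if_pos rfl]
  have col_lt : ∀ i j : Fin n, i < j → (Rz n r s (r * s⁻¹))ᵀ (i,j)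
      = (r * s⁻¹ * (1 - r * s⁻¹)) • ((Pi.single (i,j) 1 : Fin n × Fin n → ℂ)
          + s • (Pi.single (j,i) 1 : Fin n × Fin n → ℂ)) := by
    intro i j hij
    rw [Rz_col, if_neg (ne_of_lt hij), if_pos hij, smul_add, smul_smul]
    congr 1
    congr 1
    field_simp
  have col_gt : ∀ i j : Fin n, i < j → (Rz n r s (r * s⁻¹))ᵀ (j,i)
      = ((1 - r * s⁻¹) * s⁻¹) • ((Pi.single (i,j) 1 : Fin n × Fin n → ℂ)
          + s • (Pi.single (j,i) 1 : Fin n × Fin n → ℂ)) := by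
    intro i j hij
    rw [Rz_col, if_neg (ne_of_gt hij), if_neg (not_lt.mpr (le_of_lt hij)), smul_add, smul_smul]
    rw [add_comm]
    congr 1
    congr 1
    field_simp
  rw [Matrix.range_mulVecLin, Ssub]
  apply le_antisymm
  · rw [Submodule.span_le]
    rintro _ ⟨⟨k,l⟩, rfl⟩
    rw [Matrix.col]
    rcases lt_trichotomy k l with h | h | h
    · rw [col_lt k l h]
      exact Submodule.smul_mem _ _ (Submodule.subset_span (Or.inr ⟨k, l, h, rfl⟩))
    · subst h
      rw [col_diag k]
      exact Submodule.smul_mem _ _ (Submodule.subset_span (Or.inl ⟨k, rfl⟩))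
    · rw [col_gt l k h]
      exact Submodule.smul_mem _ _ (Submodule.subset_span (Or.inr ⟨l, k, h, rfl⟩))
  · rw [Submodule.span_le]
    rintro f (⟨i, rfl⟩ | ⟨i, j, hij, rfl⟩)
    · have : (Pi.single (i,i) 1 : Fin n × Fin n → ℂ)
          = (1 - r * s⁻¹ * (r * s⁻¹))⁻¹ • (Rz n r s (r * s⁻¹))ᵀ (i,i) := by
        rw [col_diag i, inv_smul_smul₀ hc0]
      rw [this]
      exact Submodule.smul_mem _ _ (Submodule.subset_span ⟨(i,i), rfl⟩)
    · have : (Pi.single (i,j) 1 : Fin n × Fin n → ℂ) + s • (Pi.single (j,i) 1 : Fin n × Fin n → ℂ)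
          = (r * s⁻¹ * (1 - r * s⁻¹))⁻¹ • (Rz n r s (r * s⁻¹))ᵀ (i,j) := by
        rw [col_lt i j hij, inv_smul_smul₀ hc1]
      rw [this]
      exact Submodule.smul_mem _ _ (Submodule.subset_span ⟨(i,j), rfl⟩)
end

section
/- The kernel of the linear map R(r s⁻¹) on V ⊗ V equals the subspace Λ²_{r,s}(V). -/
open Matrix Kronecker BigOperators

lemma Ekmv (n : ℕ) (a b c d : Fin n) (f : Fin n × Fin n → ℂ) :
    (E n a b ⊗ₖ E n c d).mulVec f = Pi.single (a, c) (f (b, d)) := by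
  ext ⟨i, k⟩
  simp only [mulVec, dotProduct, Fintype.sum_prod_type, kroneckerMap_apply, E,
    Matrix.single, of_apply, ite_mul, one_mul, zero_mul, mul_ite, mul_one, mul_zero]
  by_cases h1 : a = i <;> by_cases h2 : c = k <;>
    simp [h1, h2, Pi.single_apply, Prod.ext_iff, Finset.sum_ite_eq, eq_comm]

lemma sum_mulVec' {ι : Type*} (n : ℕ) (t : Finset ι)
    (M : ι → Matrix (Fin n × Fin n) (Fin n × Fin n) ℂ) (f : Fin n × Fin n → ℂ) :
    (∑ i ∈ t, M i).mulVec f = ∑ i ∈ t, (M i).mulVec f := by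
  ext p
  simp only [mulVec, dotProduct, Finset.sum_apply, Matrix.sum_apply, Finset.sum_mul]
  rw [Finset.sum_comm]

lemma dsum_eval (n : ℕ) (P : Fin n → Fin n → Prop) [∀ a b, Decidable (P a b)]
    (g : Fin n → Fin n → ℂ) (i k : Fin n) :
    (∑ a : Fin n, ∑ b : Fin n,
      if P a b then (Pi.single ((a, b) : Fin n × Fin n) (g a b) : Fin n × Fin n → ℂ) else 0) (i, k)
      = if P i k then g i k else 0 := by
  simp only [Finset.sum_apply, Pi.zero_apply,
    apply_ite (fun h : (Fin n × Fin n → ℂ) => h (i, k)), Pi.single_apply, Prod.mk.injEq]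
  rw [Finset.sum_eq_single i, Finset.sum_eq_single k]
  · simp
  · intro b _ hb; simp [Ne.symm hb]
  · simp
  · intro a _ ha
    apply Finset.sum_eq_zero
    intro b _
    simp [Ne.symm ha]
  · simp

lemma ssum_eval (n : ℕ) (g : Fin n → ℂ) (i k : Fin n) :
    (∑ a : Fin n, (Pi.single ((a, a) : Fin n × Fin n) (g a) : Fin n × Fin n → ℂ)) (i, k)
      = if i = k then g i else 0 := by
  simp only [Finset.sum_apply, Pi.single_apply, Prod.mk.injEq]
  rw [Finset.sum_eq_single i]
  · rcases eq_or_ne i k with rfl | h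
    · simp
    · simp [h, Ne.symm h]
  · intro a _ ha; simp [Ne.symm ha]
  · simp

lemma Rz_mulVec (n : ℕ) (r s z : ℂ) (f : Fin n × Fin n → ℂ) (i k : Fin n) :
    (Rz n r s z).mulVec f (i, k) =
      if i = k then (1 - z * (r * s⁻¹)) * f (i, i)
      else if i < k then z * (1 - r * s⁻¹) * f (i, k) + (1 - z) * s⁻¹ * f (k, i)
      else (1 - r * s⁻¹) * f (i, k) + (1 - z) * r * f (k, i) := by
  rw [Rz]
  simp only [add_mulVec, smul_mulVec, sum_mulVec',
    apply_ite (fun M : Matrix (Fin n × Fin n) (Fin n × Fin n) ℂ => M.mulVec f),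
    zero_mulVec, Ekmv]
  simp only [Pi.add_apply, Pi.smul_apply, smul_eq_mul, ssum_eval, dsum_eval]
  rcases lt_trichotomy i k with h | h | h
  · simp only [h.ne, if_neg, if_pos h, not_lt.2 h.le, if_true, if_false]
    ring
  · simp only [h, if_pos, lt_irrefl, if_false]
    ring
  · simp only [h.ne', if_neg, if_pos h, not_lt.2 h.le, if_true, if_false]
    ring


lemma smul_gen (n : ℕ) (c r : ℂ) (x y : Fin n × Fin n) :
    c • ((Pi.single x 1 : Fin n × Fin n → ℂ) - r • (Pi.single y 1 : Fin n × Fin n → ℂ))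
      = (Pi.single x c : Fin n × Fin n → ℂ) - Pi.single y (r * c) := by
  ext p
  simp only [Pi.smul_apply, Pi.sub_apply, Pi.single_apply, smul_eq_mul]
  split_ifs <;> ring

/-- The kernel of `R(r s⁻¹)` on `V ⊗ V` equals `Λ²_{r,s}(V)`. -/
theorem stmt14 (n : ℕ) (hn : 2 ≤ n) (r s : ℂ) (hr : r ≠ 0) (hs : s ≠ 0) (hrs : r ≠ s) (hsr : s ≠ -r) :
    LinearMap.ker (Rz n r s (r * s⁻¹)).mulVecLin = Lsub n r := by
  have hq1 : r * s⁻¹ ≠ 1 := by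
    intro h; apply hrs; field_simp at h; exact h
  have hqm1 : r * s⁻¹ ≠ -1 := by
    intro h; apply hsr; field_simp at h; linear_combination h
  have h1q : (1 : ℂ) - r * s⁻¹ ≠ 0 := sub_ne_zero.2 (Ne.symm hq1)
  have h1q2 : (1 : ℂ) - (r * s⁻¹) * (r * s⁻¹) ≠ 0 := by
    intro h
    have h2 : (1 - r * s⁻¹) * (1 + r * s⁻¹) = 0 := by linear_combination h
    rcases mul_eq_zero.1 h2 with h' | h'
    · exact h1q h'
    · exact hqm1 (by linear_combination h')
  have hker : ∀ f : Fin n × Fin n → ℂ,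
      f ∈ LinearMap.ker (Rz n r s (r * s⁻¹)).mulVecLin ↔
      ((∀ i, f (i, i) = 0) ∧ ∀ i k : Fin n, i < k → f (k, i) = -(r * f (i, k))) := by
    intro f
    rw [LinearMap.mem_ker]
    constructor
    · intro h
      have hp : ∀ p : Fin n × Fin n, (Rz n r s (r * s⁻¹)).mulVec f p = 0 := by
        intro p
        rw [show (Rz n r s (r * s⁻¹)).mulVec f = (Rz n r s (r * s⁻¹)).mulVecLin f from rfl, h]
        rfl
      constructor
      · intro i
        have hthis := hp (i, i)
        rw [Rz_mulVec, if_pos rfl] at hthis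
        have h0 : (1 - (r * s⁻¹) * (r * s⁻¹)) * f (i, i) = 0 := by linear_combination hthis
        exact (mul_eq_zero.1 h0).resolve_left h1q2
      · intro i k hik
        have hthis := hp (k, i)
        rw [Rz_mulVec, if_neg hik.ne', if_neg (not_lt.2 hik.le)] at hthis
        have h0 : (1 - r * s⁻¹) * (f (k, i) + r * f (i, k)) = 0 := by
          linear_combination hthis
        have h1 := (mul_eq_zero.1 h0).resolve_left h1q
        linear_combination h1
    · rintro ⟨hd, ha⟩
      ext p
      obtain ⟨i, k⟩ := p
      rw [show ((Rz n r s (r * s⁻¹)).mulVecLin f) (i, k)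
          = (Rz n r s (r * s⁻¹)).mulVec f (i, k) from rfl, Rz_mulVec]
      rcases lt_trichotomy i k with h | h | h
      · rw [if_neg h.ne, if_pos h, ha i k h]
        show _ = (0 : ℂ)
        ring
      · rw [if_pos h, h, hd k]
        show _ = (0 : ℂ)
        ring
      · rw [if_neg h.ne', if_neg (not_lt.2 h.le), ha k i h]
        show _ = (0 : ℂ)
        ring
  apply le_antisymm
  · intro f hf
    obtain ⟨hd, ha⟩ := (hker f).1 hf
    have hrep : f = ∑ i : Fin n, ∑ j : Fin n,
        if i < j then f (i, j) • ((Pi.single (i, j) 1 : Fin n × Fin n → ℂ)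
          - r • (Pi.single (j, i) 1 : Fin n × Fin n → ℂ)) else 0 := by
      have hsplit : ∀ (i j : Fin n), (if i < j then f (i, j) • ((Pi.single (i, j) 1 : Fin n × Fin n → ℂ)
          - r • (Pi.single (j, i) 1 : Fin n × Fin n → ℂ)) else 0)
          = (if i < j then (Pi.single ((i, j) : Fin n × Fin n) (f (i, j)) : Fin n × Fin n → ℂ) else 0)
            - (if i < j then (Pi.single ((j, i) : Fin n × Fin n) (r * f (i, j)) : Fin n × Fin n → ℂ) else 0) := by
        intro i j
        split_ifs with h
        · rw [smul_gen]
        · simp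
      funext p
      obtain ⟨a, b⟩ := p
      simp only [hsplit, Finset.sum_sub_distrib, Pi.sub_apply]
      rw [show (∑ i : Fin n, ∑ j : Fin n,
          if i < j then (Pi.single ((j, i) : Fin n × Fin n) (r * f (i, j)) : Fin n × Fin n → ℂ) else 0)
        = ∑ i : Fin n, ∑ j : Fin n,
          if j < i then (Pi.single ((i, j) : Fin n × Fin n) (r * f (j, i)) : Fin n × Fin n → ℂ) else 0
        from Finset.sum_comm]
      rw [dsum_eval, dsum_eval]
      rcases lt_trichotomy a b with h | h | h
      · rw [if_pos h, if_neg (not_lt.2 h.le), sub_zero]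
      · subst h
        simp [hd]
      · rw [if_neg (not_lt.2 h.le), if_pos h, zero_sub, ha b a h]
    rw [hrep]
    refine Submodule.sum_mem _ fun i _ => Submodule.sum_mem _ fun j _ => ?_
    split_ifs with h
    · exact Submodule.smul_mem _ _ (Submodule.subset_span ⟨i, j, h, rfl⟩)
    · exact Submodule.zero_mem _
  · rw [Lsub, Submodule.span_le]
    rintro f ⟨i, j, hij, rfl⟩
    rw [SetLike.mem_coe, hker]
    constructor
    · intro a
      simp only [Pi.sub_apply, Pi.smul_apply, Pi.single_apply, Prod.mk.injEq, smul_eq_mul]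
      rw [if_neg (fun hc : a = i ∧ a = j => hij.ne (hc.1.symm.trans hc.2)),
        if_neg (fun hc : a = j ∧ a = i => hij.ne' (hc.1.symm.trans hc.2))]
      ring
    · intro a b hab
      simp only [Pi.sub_apply, Pi.smul_apply, Pi.single_apply, Prod.mk.injEq, smul_eq_mul]
      have hc1 : ¬(b = i ∧ a = j) := by
        rintro ⟨rfl, rfl⟩; exact absurd hab (not_lt.2 hij.le)
      have hc4 : ¬(a = j ∧ b = i) := by
        rintro ⟨rfl, rfl⟩; exact absurd hab (not_lt.2 hij.le)
      rw [if_neg hc1, if_neg hc4]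
      by_cases h2 : a = i ∧ b = j
      · rw [if_pos (⟨h2.2, h2.1⟩ : b = j ∧ a = i), if_pos h2]
        ring
      · rw [if_neg (fun hh : b = j ∧ a = i => h2 ⟨hh.2, hh.1⟩), if_neg h2]
        ring
end

section
/- The kernel of the linear map R(r⁻¹ s) on V ⊗ V equals the subspace S²_{r,s}(V). -/
open Matrix Kronecker BigOperators

lemma E_apply (n : ℕ) (i j a c : Fin n) : E n i j a c = if i = a ∧ j = c then 1 else 0 := rfl

lemma sumA (n : ℕ) (P : Fin n → Fin n → Prop) [∀ i j, Decidable (P i j)] (a b c d : Fin n) :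
    (∑ i : Fin n, ∑ j : Fin n, if P i j then E n i j ⊗ₖ E n j i else 0) (a,b) (c,d)
      = if P a b ∧ c = b ∧ d = a then 1 else 0 := by
  simp only [Matrix.sum_apply, Matrix.kroneckerMap_apply, E_apply]
  rw [Finset.sum_eq_single a]
  · rw [Finset.sum_eq_single b]
    · by_cases h : P a b <;> by_cases h1 : c = b <;> by_cases h2 : d = a <;>
        simp_all [Matrix.kroneckerMap_apply, E_apply] <;> tauto
    · intro j _ hj
      by_cases h : P a j <;> simp_all [Matrix.kroneckerMap_apply, E_apply, Ne.symm hj]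
    · simp
  · intro i _ hi
    apply Finset.sum_eq_zero
    intro j _
    by_cases h : P i j <;> simp_all [Matrix.kroneckerMap_apply, E_apply, Ne.symm hi]
  · simp

lemma sumB (n : ℕ) (P : Fin n → Fin n → Prop) [∀ i j, Decidable (P i j)] (a b c d : Fin n) :
    (∑ i : Fin n, ∑ j : Fin n, if P i j then E n i i ⊗ₖ E n j j else 0) (a,b) (c,d)
      = if P a b ∧ c = a ∧ d = b then 1 else 0 := by
  simp only [Matrix.sum_apply, Matrix.kroneckerMap_apply, E_apply]
  rw [Finset.sum_eq_single a]
  · rw [Finset.sum_eq_single b]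
    · by_cases h : P a b <;> by_cases h1 : c = a <;> by_cases h2 : d = b <;>
        simp_all [Matrix.kroneckerMap_apply, E_apply] <;> tauto
    · intro j _ hj
      by_cases h : P a j <;> simp_all [Matrix.kroneckerMap_apply, E_apply, Ne.symm hj]
    · simp
  · intro i _ hi
    apply Finset.sum_eq_zero
    intro j _
    by_cases h : P i j <;> simp_all [Matrix.kroneckerMap_apply, E_apply, Ne.symm hi]
  · simp

lemma sumC (n : ℕ) (a b c d : Fin n) :
    (∑ i : Fin n, E n i i ⊗ₖ E n i i) (a,b) (c,d)
      = if a = b ∧ c = a ∧ d = a then 1 else 0 := by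
  simp only [Matrix.sum_apply, Matrix.kroneckerMap_apply, E_apply]
  rw [Finset.sum_eq_single a]
  · by_cases h : a = b <;> by_cases h1 : c = a <;> by_cases h2 : d = a <;> simp_all <;> tauto
  · intro i _ hi
    simp [hi, Ne.symm hi]
  · simp

lemma Rz_apply_s15 (n : ℕ) (r s z : ℂ) (a b c d : Fin n) :
    Rz n r s z (a,b) (c,d) =
      (1 - z * (r * s⁻¹)) * (if a = b ∧ c = a ∧ d = a then 1 else 0)
      + (1 - z) * (r * (if b < a ∧ c = b ∧ d = a then 1 else 0)
          + s⁻¹ * (if a < b ∧ c = b ∧ d = a then 1 else 0))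
      + (z * (1 - r * s⁻¹)) * (if a < b ∧ c = a ∧ d = b then 1 else 0)
      + (1 - r * s⁻¹) * (if b < a ∧ c = a ∧ d = b then 1 else 0) := by
  simp only [Rz, Matrix.add_apply, Matrix.smul_apply, smul_eq_mul, sumA, sumB, sumC]

lemma mulVec_apply (n : ℕ) (r s z : ℂ) (v : Fin n × Fin n → ℂ) (a b : Fin n) :
    (Rz n r s z).mulVec v (a,b) =
      (1 - z * (r * s⁻¹)) * (if a = b then v (a,a) else 0)
      + (1 - z) * (r * (if b < a then v (b,a) else 0) + s⁻¹ * (if a < b then v (b,a) else 0))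
      + (z * (1 - r * s⁻¹)) * (if a < b then v (a,b) else 0)
      + (1 - r * s⁻¹) * (if b < a then v (a,b) else 0) := by
  simp only [Matrix.mulVec, dotProduct, Fintype.sum_prod_type]
  simp only [Rz_apply_s15, add_mul, mul_ite, ite_mul, mul_zero, zero_mul, mul_one, one_mul,
    Finset.sum_add_distrib, ite_and]
  rcases lt_trichotomy a b with h | h | h
  · simp [h, asymm h, h.ne, h.ne', Finset.sum_add_distrib, Finset.sum_ite_eq,
      Finset.sum_ite_eq', mul_add, add_mul]
    ring
  · simp [h, lt_irrefl, Finset.sum_add_distrib, Finset.sum_ite_eq,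
      Finset.sum_ite_eq', mul_add, add_mul]
  · simp [h, asymm h, h.ne, h.ne', Finset.sum_add_distrib, Finset.sum_ite_eq,
      Finset.sum_ite_eq', mul_add, add_mul]
    ring



lemma ker_iff (n : ℕ) (r s : ℂ) (hr : r ≠ 0) (hs : s ≠ 0) (hrs : r ≠ s)
    (v : Fin n × Fin n → ℂ) :
    (Rz n r s (r⁻¹ * s)).mulVec v = 0 ↔
      ∀ i j : Fin n, i < j → v (j, i) = s * v (i, j) := by
  have hA : (1 : ℂ) - r⁻¹ * s ≠ 0 := by
    intro h
    rw [sub_eq_zero] at h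
    field_simp at h
    exact hrs h.symm.symm
  constructor
  · intro h i j hij
    have e1 := congrFun h (i, j)
    rw [mulVec_apply] at e1
    simp [hij, asymm hij, hij.ne, Pi.zero_apply] at e1
    field_simp at e1
    have hrs' : r - s ≠ 0 := sub_ne_zero.mpr hrs
    have key : (r - s) * (v (j, i) - s * v (i, j)) = 0 := by linear_combination e1
    rcases mul_eq_zero.mp key with h' | h'
    · exact absurd h' hrs'
    · exact sub_eq_zero.mp h'
  · intro h
    funext p
    rcases p with ⟨a, b⟩
    rw [mulVec_apply]
    rcases lt_trichotomy a b with hab | hab | hab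
    · simp [hab, asymm hab, hab.ne]
      rw [h a b hab]
      field_simp
      ring
    · simp [hab, lt_irrefl]
      field_simp
      norm_num
    · simp [hab, asymm hab, hab.ne']
      rw [h b a hab]
      field_simp
      ring

lemma mem_Ssub_of (n : ℕ) (s : ℂ) (v : Fin n × Fin n → ℂ)
    (h : ∀ i j : Fin n, i < j → v (j, i) = s * v (i, j)) : v ∈ Ssub n s := by
  have hv : v = (∑ i : Fin n, v (i, i) • (Pi.single (i, i) 1 : Fin n × Fin n → ℂ))
      + ∑ i : Fin n, ∑ j : Fin n, if i < j then
          v (i, j) • ((Pi.single (i, j) 1 : Fin n × Fin n → ℂ)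
            + s • (Pi.single (j, i) 1 : Fin n × Fin n → ℂ)) else 0 := by
    funext p
    rcases p with ⟨a, b⟩
    have hterm : ∀ i j : Fin n,
        (if i < j then v (i, j) • ((Pi.single (i, j) 1 : Fin n × Fin n → ℂ)
            + s • (Pi.single (j, i) 1 : Fin n × Fin n → ℂ)) else 0) (a, b)
        = (if b = j then (if a = i then (if i < j then v (i, j) else 0) else 0) else 0)
          + (if a = j then (if b = i then (if i < j then s * v (i, j) else 0) else 0) else 0) := by
      intro i j
      by_cases hij : i < j
      · by_cases h1 : a = i <;> by_cases h2 : b = j <;> by_cases h3 : a = j <;>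
          by_cases h4 : b = i <;>
          simp [hij, h1, h2, h3, h4, Pi.single_apply, Prod.mk.injEq] <;>
          subst_vars <;> simp_all [lt_irrefl] <;> ring
      · simp [hij, Pi.single_apply]
    simp only [Pi.add_apply, Finset.sum_apply, hterm, Finset.sum_add_distrib,
      Finset.sum_ite_eq, Finset.mem_univ, if_true, Pi.smul_apply, smul_eq_mul,
      Pi.single_apply, Prod.mk.injEq, ite_and, mul_ite, mul_one, mul_zero]
    rcases lt_trichotomy a b with hab | hab | hab
    · simp [hab, asymm hab, hab.ne, hab.ne']
    · simp [hab, lt_irrefl]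
    · simp [hab, asymm hab, hab.ne, hab.ne', h b a hab]
  rw [hv]
  refine add_mem (Submodule.sum_mem _ fun i _ => Submodule.smul_mem _ _
    (Submodule.subset_span (Or.inl ⟨i, rfl⟩))) ?_
  refine Submodule.sum_mem _ fun i _ => Submodule.sum_mem _ fun j _ => ?_
  split
  · exact Submodule.smul_mem _ _ (Submodule.subset_span (Or.inr ⟨i, j, ‹_›, rfl⟩))
  · exact Submodule.zero_mem _

/-- The kernel of `R(r⁻¹ s)` on `V ⊗ V` equals `S²_{r,s}(V)`. -/
theorem stmt15 (n : ℕ) (hn : 2 ≤ n) (r s : ℂ) (hr : r ≠ 0) (hs : s ≠ 0) (hrs : r ≠ s) (hsr : s ≠ -r) :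
    LinearMap.ker (Rz n r s (r⁻¹ * s)).mulVecLin = Ssub n s := by
  apply le_antisymm
  · intro v hv
    rw [LinearMap.mem_ker, Matrix.mulVecLin_apply] at hv
    exact mem_Ssub_of n s v ((ker_iff n r s hr hs hrs v).mp hv)
  · rw [Ssub, Submodule.span_le]
    rintro f (⟨i, rfl⟩ | ⟨i, j, hij, rfl⟩)
    · simp only [SetLike.mem_coe, LinearMap.mem_ker, Matrix.mulVecLin_apply]
      rw [ker_iff n r s hr hs hrs]
      intro a b hab
      by_cases h1 : a = i <;> by_cases h2 : b = i <;> subst_vars <;>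
        simp_all [Pi.single_apply, Prod.ext_iff, lt_irrefl]
    · simp only [SetLike.mem_coe, LinearMap.mem_ker, Matrix.mulVecLin_apply]
      rw [ker_iff n r s hr hs hrs]
      intro a b hab
      by_cases h1 : a = i <;> by_cases h2 : b = j <;> by_cases h3 : a = j <;>
        by_cases h4 : b = i <;> subst_vars <;>
        simp_all [Pi.single_apply, Prod.ext_iff, lt_irrefl, lt_asymm, asymm hab, asymm hij]
end

section
/- For every integer k with 2 ≤ k, the quotient vector space V^{⊗k} / Σ_{i=0}^{k-2} V^{⊗i} ⊗ S²_{r,s}(V) ⊗ V^{⊗(k−i−2)} has dimension equal to the binomial coefficient C(n, k) (in particular it is zero when k > n). -/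
open Matrix Kronecker BigOperators

/-- Generators of `∑_{p} V^{⊗p} ⊗ S²_{r,s}(V) ⊗ V^{⊗(k−p−2)}` inside
`V^{⊗k}`, with `V^{⊗k}` modelled as `(Fin k → Fin n) → ℂ` and the pure tensor of
basis vectors `v_{m 0} ⊗ ⋯ ⊗ v_{m (k-1)}` modelled as `Pi.single m 1`.  For each
pair of adjacent positions `p, q = p+1` and each assignment `m` of basis indices,
the generator places `v_i ⊗ v_i` (when `m p = m q`) or
`v_i ⊗ v_j + s v_j ⊗ v_i` (when `m p < m q`) in positions `p, q`, and basis
vectors elsewhere. -/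
def wedgeGens (n k : ℕ) (s : ℂ) : Set ((Fin k → Fin n) → ℂ) :=
  { f | ∃ p q : Fin k, (p : ℕ) + 1 = (q : ℕ) ∧ ∃ m : Fin k → Fin n,
      (m p = m q ∧ f = (Pi.single m 1 : (Fin k → Fin n) → ℂ)) ∨
      (m p < m q ∧ f = (Pi.single m 1 : (Fin k → Fin n) → ℂ)
        + s • (Pi.single (Function.update (Function.update m p (m q)) q (m p)) 1 :
            (Fin k → Fin n) → ℂ)) }

namespace Stmt17

variable {n k : ℕ}

/-- basis vector of `V^{⊗k}` -/
def eV (n k : ℕ) (m : Fin k → Fin n) : (Fin k → Fin n) → ℂ := Pi.single m 1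

lemma eV_apply (m x : Fin k → Fin n) : eV n k m x = if x = m then 1 else 0 :=
  Pi.single_apply m 1 x

lemma eV_same (m : Fin k → Fin n) : eV n k m m = 1 := Pi.single_eq_same m 1

/-- number of ascent pairs -/
def asc (m : Fin k → Fin n) : ℕ :=
  ((Finset.univ : Finset (Fin k × Fin k)).filter fun ij => ij.1 < ij.2 ∧ m ij.1 < m ij.2).card

lemma swap_lt {p q : Fin k} (hpq : (p : ℕ) + 1 = q) {i j : Fin k} (hij : i < j)
    (hne : ¬(i = p ∧ j = q)) : Equiv.swap p q i < Equiv.swap p q j := by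
  simp only [Equiv.swap_apply_def]
  have h1 := i.isLt; have h2 := j.isLt
  split_ifs <;>
    (simp only [Fin.ext_iff, not_and] at * ; omega)

lemma swap_eq_update {p q : Fin k} (hne : p ≠ q) (m : Fin k → Fin n) :
    m ∘ Equiv.swap p q = Function.update (Function.update m p (m q)) q (m p) := by
  funext i
  by_cases hiq : i = q
  · subst hiq; simp [Equiv.swap_apply_right]
  by_cases hip : i = p
  · subst hip
    rw [Function.comp_apply, Equiv.swap_apply_left, Function.update_of_ne hne,
      Function.update_self]
  · rw [Function.comp_apply, Equiv.swap_apply_of_ne_of_ne hip hiq,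
      Function.update_of_ne hiq, Function.update_of_ne hip]

lemma asc_swap {p q : Fin k} (hpq : (p : ℕ) + 1 = q) {m : Fin k → Fin n} (h : m p < m q) :
    asc (m ∘ Equiv.swap p q) + 1 = asc m := by
  classical
  have hplt : p < q := by rw [Fin.lt_iff_val_lt_val]; omega
  set S : Finset (Fin k × Fin k) :=
    Finset.univ.filter (fun ij => ij.1 < ij.2 ∧ m ij.1 < m ij.2) with hS
  have hmem : (p, q) ∈ S := by simp [hS, hplt, h]
  have hcard : asc (m ∘ Equiv.swap p q) = (S.erase (p, q)).card := by
    apply Finset.card_bij' (fun a _ => (Equiv.swap p q a.1, Equiv.swap p q a.2))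
      (fun a _ => (Equiv.swap p q a.1, Equiv.swap p q a.2))
    · intro a ha
      simp only [asc, Finset.mem_filter, Finset.mem_univ, true_and, Function.comp_apply] at ha
      have hane : ¬(a.1 = p ∧ a.2 = q) := by
        rintro ⟨h1, h2⟩
        rw [h1, h2] at ha
        simp only [Equiv.swap_apply_left, Equiv.swap_apply_right] at ha
        exact absurd ha.2 (lt_asymm h)
      have hlt' := swap_lt hpq ha.1 hane
      refine Finset.mem_erase.mpr ⟨?_, ?_⟩
      · intro hcon
        have h1 : Equiv.swap p q a.1 = p := congrArg Prod.fst hcon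
        have h2 : Equiv.swap p q a.2 = q := congrArg Prod.snd hcon
        have ha1 : a.1 = q := by
          have h1' := congrArg (Equiv.swap p q) h1
          rwa [Equiv.swap_apply_self, Equiv.swap_apply_left] at h1'
        have ha2 : a.2 = p := by
          have h2' := congrArg (Equiv.swap p q) h2
          rwa [Equiv.swap_apply_self, Equiv.swap_apply_right] at h2'
        have := ha.1
        rw [ha1, ha2] at this
        exact absurd hplt (lt_asymm this)
      · simp only [hS, Finset.mem_filter, Finset.mem_univ, true_and]
        exact ⟨hlt', ha.2⟩
    · intro a ha
      rw [Finset.mem_erase] at ha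
      obtain ⟨hane, ha⟩ := ha
      simp only [hS, Finset.mem_filter, Finset.mem_univ, true_and] at ha
      have hane' : ¬(a.1 = p ∧ a.2 = q) := by
        rintro ⟨h1, h2⟩; exact hane (Prod.ext h1 h2)
      simp only [asc, Finset.mem_filter, Finset.mem_univ, true_and, Function.comp_apply,
        Equiv.swap_apply_self]
      exact ⟨swap_lt hpq ha.1 hane', ha.2⟩
    · intro a _; simp [Equiv.swap_apply_self]
    · intro a _; simp [Equiv.swap_apply_self]
  rw [hcard, Finset.card_erase_of_mem hmem]
  have h0 : 0 < S.card := Finset.card_pos.mpr ⟨_, hmem⟩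
  have h1 : asc m = S.card := rfl
  omega

lemma asc_strictAnti {d : Fin k → Fin n} (hd : StrictAnti d) : asc d = 0 := by
  rw [asc, Finset.card_eq_zero, Finset.filter_eq_empty_iff]
  rintro ij - ⟨h1, h2⟩
  exact absurd h2 (lt_asymm (hd h1))

/-- strictly decreasing index maps -/
abbrev D (n k : ℕ) := {d : Fin k → Fin n // StrictAnti d}

noncomputable def L (n k : ℕ) (s : ℂ) : ((Fin k → Fin n) → ℂ) →ₗ[ℂ] (D n k → ℂ) where
  toFun f d := ∑ σ : Equiv.Perm (Fin k), (-s) ^ asc (d.1 ∘ σ) * f (d.1 ∘ σ)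
  map_add' f g := by
    funext d
    simp [mul_add, Finset.sum_add_distrib]
  map_smul' c f := by
    funext d
    simp only [Pi.smul_apply, smul_eq_mul, RingHom.id_apply]
    rw [Finset.mul_sum]
    exact Finset.sum_congr rfl (fun σ _ => by ring)

lemma L_apply (s : ℂ) (f : (Fin k → Fin n) → ℂ) (d : D n k) :
    L n k s f d = ∑ σ : Equiv.Perm (Fin k), (-s) ^ asc (d.1 ∘ σ) * f (d.1 ∘ σ) := rfl

lemma L_single_of_not_inj {s : ℂ} {m : Fin k → Fin n} (hm : ¬Function.Injective m) :
    L n k s (eV n k m) = 0 := by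
  classical
  funext d
  rw [L_apply]
  show _ = (0 : ℂ)
  apply Finset.sum_eq_zero
  intro σ _
  have hz : eV n k m (d.1 ∘ σ) = 0 := by
    rw [eV_apply, if_neg]
    intro hEq
    exact hm (hEq ▸ (d.2.injective.comp σ.injective))
  rw [hz, mul_zero]

lemma L_gen2 {s : ℂ} {m : Fin k → Fin n} {p q : Fin k} (hpq : (p : ℕ) + 1 = q)
    (h : m p < m q) :
    L n k s (eV n k m + s • eV n k (m ∘ Equiv.swap p q)) = 0 := by
  classical
  funext d
  rw [map_add, LinearMap.map_smul]
  show L n k s (eV n k m) d + s • L n k s (eV n k (m ∘ Equiv.swap p q)) d = (0 : ℂ)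
  rw [smul_eq_mul, L_apply, L_apply]
  rw [← Equiv.sum_comp (Equiv.mulRight (Equiv.swap p q))
    (fun σ => (-s) ^ asc (d.1 ∘ σ) * eV n k (m ∘ Equiv.swap p q) (d.1 ∘ σ))]
  simp only [Equiv.coe_mulRight]
  rw [Finset.mul_sum, ← Finset.sum_add_distrib]
  apply Finset.sum_eq_zero
  intro σ _
  have hdi : d.1 ∘ ⇑(σ * Equiv.swap p q) = (d.1 ∘ σ) ∘ Equiv.swap p q := by
    funext x; simp [Equiv.Perm.mul_apply]
  by_cases hc : d.1 ∘ ⇑σ = m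
  · have h2 : d.1 ∘ ⇑(σ * Equiv.swap p q) = m ∘ Equiv.swap p q := by rw [hdi, hc]
    rw [hc, h2, eV_same, eV_same]
    have hasc := asc_swap hpq h
    rw [← hasc, pow_succ]
    ring
  · have h2 : d.1 ∘ ⇑(σ * Equiv.swap p q) ≠ m ∘ Equiv.swap p q := by
      intro hEq
      apply hc
      funext x
      have := congrFun hEq (Equiv.swap p q x)
      simpa [Equiv.Perm.mul_apply, Equiv.swap_apply_self] using this
    rw [eV_apply, if_neg hc, eV_apply, if_neg h2]
    ring

lemma strictMono_perm_eq_one (σ : Equiv.Perm (Fin k)) (h : StrictMono (σ : Fin k → Fin k)) :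
    σ = 1 := by
  haveI : WellFoundedLT (Fin k) := Finite.to_wellFoundedLT
  have hrid : Set.range (σ : Fin k → Fin k) = Set.range (id : Fin k → Fin k) := by
    rw [σ.surjective.range_eq, Set.range_id]
  have hid : (σ : Fin k → Fin k) = id :=
    (StrictMono.range_inj (β := Fin k) (γ := Fin k) h strictMono_id).mp hrid
  exact Equiv.ext fun x => congrFun hid x

lemma L_single_strictAnti (s : ℂ) (d' : D n k) :
    L n k s (eV n k d'.1) = Pi.single d' (1 : ℂ) := by
  classical
  funext d
  rw [L_apply]
  have key : ∀ σ : Equiv.Perm (Fin k), d.1 ∘ ⇑σ = d'.1 → σ = 1 ∧ d = d' := by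
    intro σ hσ
    have hmono : StrictMono (σ : Fin k → Fin k) := by
      intro i j hij
      have h1 : d'.1 j < d'.1 i := d'.2 hij
      rw [← hσ] at h1
      exact d.2.lt_iff_gt.mp h1
    have hσ1 := strictMono_perm_eq_one σ hmono
    refine ⟨hσ1, Subtype.ext ?_⟩
    rw [← hσ, hσ1]
    rfl
  rcases eq_or_ne d d' with rfl | hdd
  · rw [Finset.sum_eq_single (1 : Equiv.Perm (Fin k))]
    · have h1 : d.1 ∘ ⇑(1 : Equiv.Perm (Fin k)) = d.1 := rfl
      rw [h1, eV_same, Pi.single_eq_same, asc_strictAnti d.2, pow_zero, mul_one]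
    · intro σ _ hσne
      have hz : eV n k d.1 (d.1 ∘ ⇑σ) = 0 := by
        rw [eV_apply, if_neg]
        intro hEq
        exact hσne (key σ hEq).1
      rw [hz, mul_zero]
    · intro habs; exact absurd (Finset.mem_univ _) habs
  · rw [Pi.single_apply, if_neg hdd]
    apply Finset.sum_eq_zero
    intro σ _
    have hz : eV n k d'.1 (d.1 ∘ ⇑σ) = 0 := by
      rw [eV_apply, if_neg]
      intro hEq
      exact hdd (key σ hEq).2
    rw [hz, mul_zero]

lemma span_le_ker (s : ℂ) :
    Submodule.span ℂ (wedgeGens n k s) ≤ LinearMap.ker (L n k s) := by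
  rw [Submodule.span_le]
  rintro f ⟨p, q, hpq, m, H⟩
  have hne : p ≠ q := by
    intro hcon; rw [hcon] at hpq; omega
  rcases H with ⟨heq, rfl⟩ | ⟨hlt, rfl⟩
  · refine LinearMap.mem_ker.mpr (L_single_of_not_inj ?_)
    intro hinj
    exact hne (hinj heq)
  · rw [SetLike.mem_coe, LinearMap.mem_ker]
    have hupd : (Pi.single m 1 : (Fin k → Fin n) → ℂ)
          + s • (Pi.single (Function.update (Function.update m p (m q)) q (m p)) 1 :
            (Fin k → Fin n) → ℂ)
        = eV n k m + s • eV n k (m ∘ Equiv.swap p q) := by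
      rw [eV, eV, swap_eq_update hne m]
    rw [hupd]
    exact L_gen2 hpq hlt

/-- the target spanning set in the big space -/
def T (n k : ℕ) : Set ((Fin k → Fin n) → ℂ) :=
  Set.range (fun d : D n k => eV n k d.1)

lemma single_mem_span (s : ℂ) (m : Fin k → Fin n) :
    eV n k m ∈ Submodule.span ℂ (wedgeGens n k s ∪ T n k) := by
  classical
  generalize hA : asc m = N
  induction N using Nat.strong_induction_on generalizing m with
  | _ N ih =>
    by_cases h1 : ∃ p q : Fin k, (p : ℕ) + 1 = q ∧ m p = m q
    · obtain ⟨p, q, hpq, hm⟩ := h1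
      exact Submodule.subset_span (Or.inl ⟨p, q, hpq, m, Or.inl ⟨hm, rfl⟩⟩)
    by_cases h2 : ∃ p q : Fin k, (p : ℕ) + 1 = q ∧ m p < m q
    · obtain ⟨p, q, hpq, hlt⟩ := h2
      have hne : p ≠ q := by intro hcon; rw [hcon] at hpq; omega
      have hg : eV n k m + s • eV n k (m ∘ Equiv.swap p q) ∈ wedgeGens n k s := by
        refine ⟨p, q, hpq, m, Or.inr ⟨hlt, ?_⟩⟩
        show eV n k m + s • eV n k (m ∘ Equiv.swap p q)
          = eV n k m + s • eV n k (Function.update (Function.update m p (m q)) q (m p))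
        rw [swap_eq_update hne m]
      have hasc := asc_swap hpq hlt
      subst hA
      have hmem := ih (asc (m ∘ Equiv.swap p q)) (by omega) (m ∘ Equiv.swap p q) rfl
      have hdec : eV n k m
          = (eV n k m + s • eV n k (m ∘ Equiv.swap p q))
            - s • eV n k (m ∘ Equiv.swap p q) := by
        rw [add_sub_cancel_right]
      rw [hdec]
      exact Submodule.sub_mem _ (Submodule.subset_span (Or.inl hg))
        (Submodule.smul_mem _ _ hmem)
    · push_neg at h1 h2
      have hadj : ∀ p q : Fin k, (p : ℕ) + 1 = q → m q < m p := by
        intro p q hpq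
        exact lt_of_le_of_ne (h2 p q hpq) (fun hEq => h1 p q hpq hEq.symm)
      have hanti : StrictAnti m := by
        have keyt : ∀ t : ℕ, ∀ i j : Fin k, (j : ℕ) = (i : ℕ) + t + 1 → m j < m i := by
          intro t
          induction t with
          | zero => intro i j hj; exact hadj i j (by omega)
          | succ t iht =>
            intro i j hj
            have hmidlt : (i : ℕ) + t + 1 < k := by have := j.isLt; omega
            exact (hadj ⟨(i : ℕ) + t + 1, hmidlt⟩ j (by simp; omega)).trans
              (iht i ⟨(i : ℕ) + t + 1, hmidlt⟩ (by simp))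
        intro i j hij
        have hij' : (i : ℕ) < (j : ℕ) := hij
        exact keyt ((j : ℕ) - (i : ℕ) - 1) i j (by omega)
      exact Submodule.subset_span (Or.inr ⟨⟨m, hanti⟩, rfl⟩)

lemma span_union_eq_top (s : ℂ) :
    Submodule.span ℂ (wedgeGens n k s ∪ T n k) = ⊤ := by
  classical
  rw [eq_top_iff, ← (Pi.basisFun ℂ (Fin k → Fin n)).span_eq]
  apply Submodule.span_le.mpr
  rintro _ ⟨m, rfl⟩
  rw [Pi.basisFun_apply]
  exact single_mem_span s m

noncomputable instance : Fintype (D n k) := by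
  classical exact Fintype.ofFinite _

lemma card_D : Fintype.card (D n k) = n.choose k := by
  classical
  have e1 : D n k ≃ {f : Fin k → Fin n // StrictMono f} :=
    { toFun := fun d => ⟨d.1 ∘ Fin.rev, fun i j hij => d.2 (Fin.rev_lt_rev.mpr hij)⟩
      invFun := fun f => ⟨f.1 ∘ Fin.rev, fun i j hij => f.2 (Fin.rev_lt_rev.mpr hij)⟩
      left_inv := fun d => Subtype.ext (by funext i; simp [Fin.rev_rev])
      right_inv := fun f => Subtype.ext (by funext i; simp [Fin.rev_rev]) }
  have e2 : {f : Fin k → Fin n // StrictMono f} ≃ {s : Finset (Fin n) // s.card = k} :=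
    { toFun := fun f => ⟨Finset.univ.image f.1, by
        rw [Finset.card_image_of_injective _ f.2.injective, Finset.card_univ,
          Fintype.card_fin]⟩
      invFun := fun s => ⟨s.1.orderEmbOfFin s.2, (s.1.orderEmbOfFin s.2).strictMono⟩
      left_inv := fun f => Subtype.ext
        (Finset.orderEmbOfFin_unique _ (fun x => Finset.mem_image_of_mem _ (Finset.mem_univ x))
          f.2).symm
      right_inv := fun s => Subtype.ext (by
        rw [← Finset.coe_inj, Finset.coe_image, Finset.coe_univ, Set.image_univ,
          Finset.range_orderEmbOfFin]) }
  rw [Fintype.card_congr (e1.trans e2), Fintype.card_finset_len, Fintype.card_fin]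

end Stmt17

open Stmt17 in
/-- The `(r,s)`-wedge space
`V^{⊗k} / ∑_i V^{⊗i} ⊗ S²_{r,s}(V) ⊗ V^{⊗(k−i−2)}` has dimension `C(n, k)`. -/
theorem stmt17 (n : ℕ) (hn : 2 ≤ n) (r s : ℂ) (hr : r ≠ 0) (hs : s ≠ 0) (hrs : r ≠ s) (hsr : s ≠ -r) (k : ℕ) (hk : 2 ≤ k) :
    Module.finrank ℂ (((Fin k → Fin n) → ℂ) ⧸ Submodule.span ℂ (wedgeGens n k s))
      = Nat.choose n k := by
  classical
  set W := Submodule.span ℂ (wedgeGens n k s) with hW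
  have hker : W ≤ LinearMap.ker (L n k s) := span_le_ker s
  set Lbar := W.liftQ (L n k s) hker with hLbar
  have hLbar_surj : Function.Surjective Lbar := by
    rw [← LinearMap.range_eq_top, eq_top_iff, ← (Pi.basisFun ℂ (D n k)).span_eq]
    apply Submodule.span_le.mpr
    rintro _ ⟨d, rfl⟩
    refine ⟨W.mkQ (eV n k d.1), ?_⟩
    rw [Pi.basisFun_apply, Submodule.mkQ_apply, hLbar, Submodule.liftQ_apply,
      L_single_strictAnti]
  have h1 : Fintype.card (D n k) ≤
      Module.finrank ℂ (((Fin k → Fin n) → ℂ) ⧸ W) := by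
    have hfr : Module.finrank ℂ (D n k → ℂ) = Fintype.card (D n k) :=
      Module.finrank_fintype_fun_eq_card ℂ
    rw [← hfr]
    calc Module.finrank ℂ (D n k → ℂ)
        = Module.finrank ℂ (⊤ : Submodule ℂ (D n k → ℂ)) := (finrank_top _ _).symm
      _ = Module.finrank ℂ (LinearMap.range Lbar) := by
          rw [LinearMap.range_eq_top.mpr hLbar_surj]
      _ ≤ Module.finrank ℂ (((Fin k → Fin n) → ℂ) ⧸ W) := LinearMap.finrank_range_le _
  have h2 : Module.finrank ℂ (((Fin k → Fin n) → ℂ) ⧸ W) ≤ Fintype.card (D n k) := by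
    have hspan : Submodule.span ℂ
        (Set.range (fun d : D n k => W.mkQ (eV n k d.1))) = ⊤ := by
      rw [eq_top_iff]
      calc (⊤ : Submodule ℂ (((Fin k → Fin n) → ℂ) ⧸ W))
          = Submodule.map W.mkQ ⊤ := by rw [Submodule.map_top, Submodule.range_mkQ]
        _ = Submodule.map W.mkQ (Submodule.span ℂ (wedgeGens n k s ∪ T n k)) := by
            rw [span_union_eq_top]
        _ = Submodule.span ℂ (W.mkQ '' (wedgeGens n k s ∪ T n k)) := by
            rw [Submodule.map_span]
        _ ≤ Submodule.span ℂ (Set.range (fun d : D n k => W.mkQ (eV n k d.1))) := by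
            apply Submodule.span_le.mpr
            rintro _ ⟨g, hg | hg, rfl⟩
            · have hz : W.mkQ g = 0 := by
                rw [Submodule.mkQ_apply, Submodule.Quotient.mk_eq_zero]
                exact Submodule.subset_span hg
              rw [hz]
              exact Submodule.zero_mem _
            · obtain ⟨d, rfl⟩ := hg
              exact Submodule.subset_span ⟨d, rfl⟩
    have hle := finrank_range_le_card (R := ℂ) (fun d : D n k => W.mkQ (eV n k d.1))
    rw [Set.finrank, hspan, finrank_top] at hle
    exact hle
  have hcard := card_D (n := n) (k := k)
  omega
end

section
/- For every integer k with 2 ≤ k ≤ n and every i with 1 ≤ i ≤ n−1, the coproduct action of the generator e_i on V^{⊗k}, given by the operator Δ^{(k)}(e_i) = Σ_{j=1}^{k} ω_i^{⊗(j−1)} ⊗ E_{i,i+1} ⊗ I^{⊗(k−j)} (where ω_i = r E_{ii} + s E_{i+1,i+1} + Σ_{m ≠ i,i+1} E_{mm}), maps the vector v_1 ⊗ v_2 ⊗ ⋯ ⊗ v_k into the subspace Σ_{j=0}^{k-2} V^{⊗j} ⊗ S²_{r,s}(V) ⊗ V^{⊗(k−j−2)} of V^{⊗k}. -/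
open Matrix Kronecker BigOperators

/-- The tensor product `A 0 ⊗ A 1 ⊗ ⋯ ⊗ A (k-1)` of `n × n` matrices, acting on
`V^{⊗k}` modelled as `(Fin k → Fin n) → ℂ`. -/
noncomputable def tensorMat (n k : ℕ) (A : Fin k → Matrix (Fin n) (Fin n) ℂ) :
    Matrix (Fin k → Fin n) (Fin k → Fin n) ℂ :=
  fun m m' => ∏ t : Fin k, A t (m t) (m' t)

/-- The matrix `ω_i = r E_{ii} + s E_{i+1,i+1} + ∑_{m ≠ i,i+1} E_{mm}` of the natural
representation (here `i'` stands for `i+1`). -/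
noncomputable def omegaMat (n : ℕ) (r s : ℂ) (i i' : Fin n) : Matrix (Fin n) (Fin n) ℂ :=
  r • E n i i + s • E n i' i' + ∑ m : Fin n, if m ≠ i ∧ m ≠ i' then E n m m else 0

/-- The coproduct action `Δ^{(k)}(e_i) = ∑_j ω_i^{⊗(j−1)} ⊗ E_{i,i+1} ⊗ I^{⊗(k−j)}`
on `V^{⊗k}`. -/
noncomputable def coprodE (n k : ℕ) (r s : ℂ) (i i' : Fin n) :
    Matrix (Fin k → Fin n) (Fin k → Fin n) ℂ :=
  ∑ j : Fin k, tensorMat n k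
    (fun t => if t < j then omegaMat n r s i i' else if t = j then E n i i' else 1)

lemma omega_apply (n : ℕ) (r s : ℂ) (i i' a b : Fin n) (h : i ≠ i') :
    omegaMat n r s i i' a b =
      if a = b then (if a = i then r else if a = i' then s else 1) else 0 := by
  simp only [omegaMat, Matrix.add_apply, Matrix.smul_apply, Matrix.sum_apply, E,
    Matrix.single, Matrix.of_apply, smul_eq_mul, ite_apply, Matrix.zero_apply]
  rw [Finset.sum_eq_single a]
  · by_cases hab : a = b <;> by_cases hai : a = i <;> by_cases hai' : a = i' <;>
      subst_vars <;> simp_all [eq_comm]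
  · intro c _ hca
    split_ifs with h1 <;> simp_all
  · simp


/-- `Δ^{(k)}(e_i)` maps `v_1 ⊗ ⋯ ⊗ v_k` into
`∑_j V^{⊗j} ⊗ S²_{r,s}(V) ⊗ V^{⊗(k−j−2)}`. -/
theorem stmt18 (n : ℕ) (hn : 2 ≤ n) (r s : ℂ) (hr : r ≠ 0) (hs : s ≠ 0) (hrs : r ≠ s) (hsr : s ≠ -r) (k : ℕ) (hk : 2 ≤ k) (hkn : k ≤ n)
    (i : Fin n) (hi : (i : ℕ) + 1 < n) :
    (coprodE n k r s i ⟨(i : ℕ) + 1, hi⟩).mulVec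
        (Pi.single (fun t : Fin k => ⟨(t : ℕ), lt_of_lt_of_le t.isLt hkn⟩) 1)
      ∈ Submodule.span ℂ (wedgeGens n k s) := by
  set i' : Fin n := ⟨(i : ℕ) + 1, hi⟩ with hi'
  have hii' : i ≠ i' := by
    intro h; have := congrArg Fin.val h; simp [hi'] at this
  set x : Fin k → Fin n := fun t : Fin k => ⟨(t : ℕ), lt_of_lt_of_le t.isLt hkn⟩ with hxdef
  rw [show (coprodE n k r s i i').mulVec (Pi.single x 1) = fun y => coprodE n k r s i i' y x * 1 from by
    funext y; simp [Matrix.mulVec_single]]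
  by_cases hc : (i : ℕ) + 1 < k
  · set p : Fin k := ⟨(i : ℕ), by omega⟩ with hp
    set q : Fin k := ⟨(i : ℕ) + 1, hc⟩ with hq
    set m : Fin k → Fin n := Function.update x q i with hm
    have hmq : m q = i := by simp [hm]
    have hmne : ∀ t, t ≠ q → m t = x t := fun t ht => Function.update_of_ne ht _ _
    have hpq : p ≠ q := by simp [hp, hq, Fin.ext_iff]
    have hxq : x q = i' := by apply Fin.ext; simp [hxdef, hi', hq]
    have key : (fun y => coprodE n k r s i i' y x * 1) = r • (Pi.single m 1 : (Fin k → Fin n) → ℂ) := by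
      funext y
      simp only [mul_one, coprodE, Matrix.sum_apply, tensorMat, Pi.smul_apply,
        Pi.single_apply, smul_eq_mul]
      rw [Finset.sum_eq_single q]
      · by_cases hy : y = m
        · subst hy
          rw [if_pos rfl, mul_one]
          rw [Finset.prod_eq_single p]
          · have hplt : p < q := by simp [hp, hq, Fin.lt_def]
            rw [if_pos hplt]
            have hmp : m p = i := by
              rw [hmne p hpq]
            have hxp : x p = i := by apply Fin.ext; simp [hxdef, hp]
            rw [hmp, hxp, omega_apply n r s i i' i i hii']
            simp
          · intro t _ htp
            by_cases h1 : t < q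
            · rw [if_pos h1]
              have htq : t ≠ q := ne_of_lt h1
              rw [hmne t htq, omega_apply n r s i i' _ _ hii']
              have hxi : x t ≠ i := by
                intro h; apply htp; apply Fin.ext
                have := congrArg Fin.val h; simpa [hxdef, hp] using this
              have hxi' : x t ≠ i' := by
                intro h; apply htq; apply Fin.ext
                have := congrArg Fin.val h
                simp [hxdef, hi', hq] at this ⊢; omega
              simp [hxi, hxi']
            · rw [if_neg h1]
              by_cases h2 : t = q
              · rw [if_pos h2, h2, hmq, hxq]
                simp [E, Matrix.single]
              · rw [if_neg h2, hmne t h2]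
                simp [Matrix.one_apply]
          · simp
        · obtain ⟨t, ht⟩ := Function.ne_iff.mp hy
          rw [if_neg hy, mul_zero]
          apply Finset.prod_eq_zero (Finset.mem_univ t)
          by_cases h1 : t < q
          · rw [if_pos h1, omega_apply n r s i i' _ _ hii']
            rw [hmne t (ne_of_lt h1)] at ht
            simp [ht]
          · rw [if_neg h1]
            by_cases h2 : t = q
            · subst h2; rw [if_pos rfl, hmq] at *
              simp [E, Matrix.single, Ne.symm ht]
            · rw [if_neg h2]
              rw [hmne t h2] at ht
              simp [Matrix.one_apply, ht]
      · intro j _ hjq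
        apply Finset.prod_eq_zero (Finset.mem_univ j)
        rw [if_neg (lt_irrefl j), if_pos rfl]
        have hxji : x j ≠ i' := by
          intro h; apply hjq; apply Fin.ext
          have := congrArg Fin.val h
          simp [hxdef, hi', hq] at this ⊢; omega
        simp [E, Matrix.single, Ne.symm hxji]
      · simp
    rw [key]
    refine Submodule.smul_mem _ r (Submodule.subset_span ?_)
    refine ⟨p, q, by simp [hp, hq], m, Or.inl ⟨?_, rfl⟩⟩
    rw [hmq, hmne p hpq]
  · have key : (fun y => coprodE n k r s i i' y x * 1) = 0 := by
      funext y
      simp only [mul_one, coprodE, Matrix.sum_apply, tensorMat]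
      apply Finset.sum_eq_zero
      intro j _
      apply Finset.prod_eq_zero (Finset.mem_univ j)
      rw [if_neg (lt_irrefl j), if_pos rfl]
      have : i' ≠ x j := by
        intro h; have := congrArg Fin.val h
        simp [hxdef, hi'] at this; omega
      simp [E, Matrix.single, this]
    rw [key]; exact Submodule.zero_mem _
end
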